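/- arXiv:1510.06145 — 7 statements merged into one kernel-verified Lean document; each statement's English description precedes it below -/
import Mathlib

section
/- If P, P1, P2 are polynomials in ℓ variables over a field k with P = P1 * P2 and all nonzero, then the Newton polytope of P equals the Minkowski sum of the Newton polytopes of P1 and P2. -/
set_option maxHeartbeats 1000000

open MvPolynomial Pointwise

/-- The Newton polytope of a multivariate polynomial: the convex hull in `ℝ^ℓ` of the
exponent vectors of monomials with nonzero coefficient. -/
noncomputable def newtonPolytope {l : ℕ} {k : Type*} [CommSemiring k]
    (P : MvPolynomial (Fin l) k) : Set (Fin l → ℝ) :=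
  convexHull ℝ ((fun m : Fin l →₀ ℕ => fun i : Fin l => (m i : ℝ)) ''
    (P.support : Set (Fin l →₀ ℕ)))

/-- A set `Γ ⊆ ℝ^ℓ` is summable if it is the Minkowski sum of two convex polytopes with
vertices in `ℕ^ℓ`, each having at least two points. -/
def IsSummable {l : ℕ} (Γ : Set (Fin l → ℝ)) : Prop :=
  ∃ A B : Finset (Fin l → ℕ), 2 ≤ A.card ∧ 2 ≤ B.card ∧
    Γ = convexHull ℝ ((fun m : Fin l → ℕ => fun i : Fin l => (m i : ℝ)) '' (A : Set (Fin l → ℕ)))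
      + convexHull ℝ ((fun m : Fin l → ℕ => fun i : Fin l => (m i : ℝ)) '' (B : Set (Fin l → ℕ)))

namespace NewtonAux

variable {l : ℕ}

/-- realization of an exponent vector -/
def r (m : Fin l →₀ ℕ) : Fin l → ℝ := fun i => (m i : ℝ)

lemma r_add (a b : Fin l →₀ ℕ) : r (a + b) = r a + r b := by
  funext i; simp [r]

/-- key function for choosing the extreme monomial -/
noncomputable def g (f : (Fin l → ℝ) →ₗ[ℝ] ℝ) (a : Fin l →₀ ℕ) :
    ℝ ×ₗ Lex (Fin l →₀ ℕ) := toLex (f (r a), toLex a)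

lemma fst_le_of_g_le {f : (Fin l → ℝ) →ₗ[ℝ] ℝ} {a b : Fin l →₀ ℕ}
    (h : g f a ≤ g f b) : f (r a) ≤ f (r b) := by
  rcases Prod.Lex.le_iff.1 h with h' | ⟨h', _⟩
  · exact le_of_lt h'
  · exact le_of_eq h'

lemma key {k : Type*} [Field k] (f : (Fin l → ℝ) →ₗ[ℝ] ℝ)
    (P1 P2 : MvPolynomial (Fin l) k) (h1 : P1 ≠ 0) (h2 : P2 ≠ 0) :
    ∃ m1 ∈ P1.support, ∃ m2 ∈ P2.support, m1 + m2 ∈ (P1 * P2).support ∧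
      (∀ a ∈ P1.support, f (r a) ≤ f (r m1)) ∧
      (∀ b ∈ P2.support, f (r b) ≤ f (r m2)) := by
  obtain ⟨m1, hm1, hmax1⟩ := P1.support.exists_max_image (g f)
    (support_nonempty.2 h1)
  obtain ⟨m2, hm2, hmax2⟩ := P2.support.exists_max_image (g f)
    (support_nonempty.2 h2)
  -- uniqueness of the decomposition
  have uniq : ∀ a ∈ P1.support, ∀ b ∈ P2.support, a + b = m1 + m2 →
      a = m1 ∧ b = m2 := by
    intro a ha b hb hab
    have hfa := fst_le_of_g_le (hmax1 a ha)
    have hfb := fst_le_of_g_le (hmax2 b hb)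
    have hsum : f (r a) + f (r b) = f (r m1) + f (r m2) := by
      rw [← map_add, ← map_add, ← r_add, ← r_add, hab]
    have hfa' : f (r a) = f (r m1) := by linarith
    have hfb' : f (r b) = f (r m2) := by linarith
    have hla : toLex a ≤ toLex m1 := by
      rcases Prod.Lex.le_iff.1 (hmax1 a ha) with h' | ⟨_, h'⟩
      · exact absurd hfa' (ne_of_lt h')
      · exact h'
    have hlb : toLex b ≤ toLex m2 := by
      rcases Prod.Lex.le_iff.1 (hmax2 b hb) with h' | ⟨_, h'⟩
      · exact absurd hfb' (ne_of_lt h')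
      · exact h'
    have hlsum : toLex a + toLex b = toLex m1 + toLex m2 := by
      rw [← toLex_add, ← toLex_add, hab]
    have ham : a = m1 := by
      rcases lt_or_eq_of_le hla with h' | h'
      · exact absurd hlsum (ne_of_lt (add_lt_add_of_lt_of_le h' hlb))
      · exact toLex.injective h'
    refine ⟨ham, ?_⟩
    subst ham
    exact add_left_cancel hab
  refine ⟨m1, hm1, m2, hm2, ?_, fun a ha => fst_le_of_g_le (hmax1 a ha),
    fun b hb => fst_le_of_g_le (hmax2 b hb)⟩
  rw [mem_support_iff, coeff_mul]
  have hs := Finset.sum_eq_single_of_mem (s := Finset.HasAntidiagonal.antidiagonal (m1 + m2))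
    (f := fun x => MvPolynomial.coeff x.1 P1 * MvPolynomial.coeff x.2 P2) (m1, m2)
    (Finset.HasAntidiagonal.mem_antidiagonal.mpr rfl) ?_
  · rw [hs]
    exact mul_ne_zero (mem_support_iff.1 hm1) (mem_support_iff.1 hm2)
  · rintro ⟨a, b⟩ hab hne
    rw [Finset.HasAntidiagonal.mem_antidiagonal] at hab
    by_contra hc
    simp only [ne_eq] at hc
    obtain ⟨ca, cb⟩ : MvPolynomial.coeff a P1 ≠ 0 ∧ MvPolynomial.coeff b P2 ≠ 0 := by
      constructor <;> intro h0 <;> apply hc <;> simp [h0]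
    obtain ⟨ea, eb⟩ := uniq a (mem_support_iff.2 ca) b (mem_support_iff.2 cb) hab
    exact hne (by rw [ea, eb])

end NewtonAux

namespace NewtonAux

lemma np_eq {l : ℕ} {k : Type*} [CommSemiring k] (P : MvPolynomial (Fin l) k) :
    newtonPolytope P = convexHull ℝ (r '' (P.support : Set (Fin l →₀ ℕ))) := rfl

end NewtonAux

open NewtonAux in
theorem stmt0 {l : ℕ} {k : Type*} [Field k] (P P1 P2 : MvPolynomial (Fin l) k)
    (hP : P ≠ 0) (h1 : P1 ≠ 0) (h2 : P2 ≠ 0) (h : P = P1 * P2) :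
    newtonPolytope P = newtonPolytope P1 + newtonPolytope P2 := by
  classical
  subst h
  rw [np_eq, np_eq, np_eq, ← convexHull_add]
  apply Set.Subset.antisymm
  · apply convexHull_mono
    intro y hy
    obtain ⟨m, hm, rfl⟩ := hy
    have hm' : m ∈ P1.support + P2.support := MvPolynomial.support_mul P1 P2 hm
    rw [Finset.mem_add] at hm'
    obtain ⟨a, ha, b, hb, rfl⟩ := hm'
    rw [r_add]
    exact Set.add_mem_add ⟨a, ha, rfl⟩ ⟨b, hb, rfl⟩
  · rw [convexHull_add]
    intro x hx
    by_contra hxn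
    have hconv : Convex ℝ (convexHull ℝ (r '' ((P1 * P2).support : Set (Fin l →₀ ℕ)))) :=
      convex_convexHull _ _
    have hclosed : IsClosed (convexHull ℝ (r '' ((P1 * P2).support : Set (Fin l →₀ ℕ)))) :=
      (((((P1 * P2).support).finite_toSet).image r).isCompact_convexHull (𝕜 := ℝ)).isClosed
    obtain ⟨f, u, hfu, hux⟩ := geometric_hahn_banach_closed_point hconv hclosed hxn
    obtain ⟨m1, hm1, m2, hm2, hmm, hb1, hb2⟩ := key f.toLinearMap P1 P2 h1 h2
    obtain ⟨y1, hy1, y2, hy2, rfl⟩ := Set.mem_add.1 hx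
    have hhalf : ∀ (c : ℝ), Convex ℝ {y : Fin l → ℝ | f y ≤ c} := fun c =>
      convex_halfSpace_le ⟨f.map_add, f.map_smul⟩ c
    have hy1' : f y1 ≤ f (r m1) := by
      refine convexHull_min ?_ (hhalf _) hy1
      rintro _ ⟨a, ha, rfl⟩
      exact hb1 a ha
    have hy2' : f y2 ≤ f (r m2) := by
      refine convexHull_min ?_ (hhalf _) hy2
      rintro _ ⟨b, hb, rfl⟩
      exact hb2 b hb
    have hlt : f (r (m1 + m2)) < u :=
      hfu _ (subset_convexHull ℝ _ ⟨m1 + m2, hmm, rfl⟩)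
    rw [r_add, map_add] at hlt
    rw [map_add] at hux
    linarith
end

section
/- The polynomial (x - y + 1)(x + y + 1) + 1 is irreducible in ℂ[x,y], even though its Newton polygon coincides with that of (x - y + 1)(x + y + 1), which is summable. -/
open MvPolynomial Pointwise

lemma no_sqrt (b : Polynomial ℂ) : b*b ≠ Polynomial.X^2 - 1 := by
  intro h
  have hne : (Polynomial.X^2 - 1 : Polynomial ℂ) ≠ 0 := fun hh => by
    simpa [Polynomial.coeff_one] using congrArg (fun p => Polynomial.coeff p 2) hh
  have hb : b ≠ 0 := by rintro rfl; simp at h; exact hne h.symm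
  have hdeg : b.natDegree = 1 := by
    have h2 : (b*b).natDegree = 2 := by rw [h]; compute_degree!
    rw [Polynomial.natDegree_mul hb hb] at h2; omega
  set a := b.coeff 1 with ha'; set c := b.coeff 0 with hc'
  have ha : a ≠ 0 := by
    have := mt Polynomial.leadingCoeff_eq_zero.mp hb
    rwa [Polynomial.leadingCoeff, hdeg] at this
  have h1 : 2*(a*c) = 0 := by
    have := congrArg (fun p => Polynomial.coeff p 1) h
    simp [-map_pow, Polynomial.coeff_mul, Finset.Nat.sum_antidiagonal_eq_sum_range_succ_mk,
      Finset.sum_range_succ, Polynomial.coeff_X_pow, Polynomial.coeff_one] at this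
    linear_combination this
  have h0 : c*c = -1 := by
    have := congrArg (fun p => Polynomial.coeff p 0) h
    simp [-map_pow, Polynomial.coeff_mul, Polynomial.coeff_X_pow, Polynomial.coeff_one] at this
    linear_combination this
  have hc : c = 0 := by
    rcases mul_eq_zero.mp h1 with h | h
    · norm_num at h
    · rcases mul_eq_zero.mp h with h | h
      · exact absurd h ha
      · exact h
  rw [hc] at h0; norm_num at h0

lemma irred_q : Irreducible ((Polynomial.X - Polynomial.C Polynomial.X + 1) * (Polynomial.X + Polynomial.C Polynomial.X + 1) + 1 : Polynomial (Polynomial ℂ)) := by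
  set q : Polynomial (Polynomial ℂ) := (Polynomial.X - Polynomial.C Polynomial.X + 1) * (Polynomial.X + Polynomial.C Polynomial.X + 1) + 1 with hq
  have qform : q = Polynomial.C 1 * Polynomial.X^2 + Polynomial.C 2 * Polynomial.X + Polynomial.C (2 - Polynomial.X^2) := by
    rw [hq]; simp only [map_sub, map_pow, map_ofNat, map_one]; ring
  have hdq : q.natDegree = 2 := by rw [qform]; exact Polynomial.natDegree_quadratic one_ne_zero
  have hlcq : q.leadingCoeff = 1 := by
    rw [Polynomial.leadingCoeff, hdq, qform]
    simp [-map_pow, Polynomial.coeff_X_pow, Polynomial.coeff_C]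
  constructor
  · intro hu
    have := Polynomial.natDegree_eq_zero_of_isUnit hu
    omega
  · intro f g hfg
    have hq0 : q ≠ 0 := fun h => by rw [h] at hdq; simp at hdq
    have hf0 : f ≠ 0 := fun h => hq0 (by rw [hfg, h, zero_mul])
    have hg0 : g ≠ 0 := fun h => hq0 (by rw [hfg, h, mul_zero])
    have hlc : f.leadingCoeff * g.leadingCoeff = 1 := by
      rw [← Polynomial.leadingCoeff_mul, ← hfg, hlcq]
    have hdsum : f.natDegree + g.natDegree = 2 := by
      rw [← Polynomial.natDegree_mul hf0 hg0, ← hfg, hdq]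
    have huf : IsUnit f.leadingCoeff := IsUnit.of_mul_eq_one _ hlc
    have hug : IsUnit g.leadingCoeff := IsUnit.of_mul_eq_one _ (by rwa [mul_comm] at hlc)
    rcases Nat.lt_or_ge f.natDegree 1 with hf1 | hf1
    · left
      rw [Polynomial.eq_C_of_natDegree_eq_zero (by omega : f.natDegree = 0)]
      exact Polynomial.isUnit_C.mpr (by rwa [Polynomial.leadingCoeff, (by omega : f.natDegree = 0)] at huf)
    rcases Nat.lt_or_ge g.natDegree 1 with hg1 | hg1
    · right
      rw [Polynomial.eq_C_of_natDegree_eq_zero (by omega : g.natDegree = 0)]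
      exact Polynomial.isUnit_C.mpr (by rwa [Polynomial.leadingCoeff, (by omega : g.natDegree = 0)] at hug)
    exfalso
    have hfd : f.natDegree = 1 := by omega
    have hgd : g.natDegree = 1 := by omega
    set a := f.coeff 1 with ha'; set b := f.coeff 0 with hb'
    set a' := g.coeff 1 with ha''; set b' := g.coeff 0 with hb''
    have hfe : f = Polynomial.C a * Polynomial.X + Polynomial.C b := Polynomial.eq_X_add_C_of_natDegree_le_one hfd.le
    have hge : g = Polynomial.C a' * Polynomial.X + Polynomial.C b' := Polynomial.eq_X_add_C_of_natDegree_le_one hgd.le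
    rw [qform, hfe, hge] at hfg
    have e2 : (1 : Polynomial ℂ) = a * a' := by
      have := congrArg (fun p => Polynomial.coeff p 2) hfg
      simpa [-map_pow, Polynomial.coeff_mul, Finset.Nat.sum_antidiagonal_eq_sum_range_succ_mk,
        Finset.sum_range_succ, Polynomial.coeff_X_pow, Polynomial.coeff_X, Polynomial.coeff_C] using this
    have e1 : (2 : Polynomial ℂ) = a * b' + b * a' := by
      have := congrArg (fun p => Polynomial.coeff p 1) hfg
      simp [-map_pow, Polynomial.coeff_mul, Finset.Nat.sum_antidiagonal_eq_sum_range_succ_mk,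
        Finset.sum_range_succ, Polynomial.coeff_X_pow, Polynomial.coeff_X, Polynomial.coeff_C] at this
      linear_combination this
    have e0 : (2 : Polynomial ℂ) - Polynomial.X^2 = b * b' := by
      have := congrArg (fun p => Polynomial.coeff p 0) hfg
      simpa [-map_pow, Polynomial.coeff_mul, Finset.Nat.sum_antidiagonal_eq_sum_range_succ_mk,
        Finset.sum_range_succ, Polynomial.coeff_X_pow, Polynomial.coeff_X, Polynomial.coeff_C] using this
    have e3 : a * a' * (b * b') = 2 - Polynomial.X^2 := by rw [← e2, one_mul, ← e0]
    exact no_sqrt (a' * b - 1) (by linear_combination -(a' * b) * e1 - e3)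

noncomputable def myEquiv : MvPolynomial (Fin 2) ℂ ≃+* Polynomial (Polynomial ℂ) :=
  (MvPolynomial.finSuccEquiv ℂ 1).toRingEquiv.trans
    (Polynomial.mapEquiv (((MvPolynomial.renameEquiv ℂ (Equiv.equivPUnit.{1,1} (Fin 1))).trans
      (MvPolynomial.pUnitAlgEquiv ℂ)).toRingEquiv))

lemma myEquiv_X0 : myEquiv (MvPolynomial.X 0) = Polynomial.X := by
  simp [myEquiv, MvPolynomial.finSuccEquiv_X_zero, Polynomial.mapEquiv]

lemma myEquiv_X1 : myEquiv (MvPolynomial.X 1) = Polynomial.C Polynomial.X := by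
  have h1 : (1 : Fin 2) = (0 : Fin 1).succ := rfl
  rw [myEquiv, RingEquiv.trans_apply, h1]
  simp only [AlgEquiv.toRingEquiv_eq_coe, AlgEquiv.coe_ringEquiv,
    MvPolynomial.finSuccEquiv_X_succ, Polynomial.mapEquiv]
  simp

lemma irred_P :
    Irreducible ((MvPolynomial.X 0 - MvPolynomial.X 1 + 1) * (MvPolynomial.X 0 + MvPolynomial.X 1 + 1) + 1 :
      MvPolynomial (Fin 2) ℂ) := by
  rw [← MulEquiv.irreducible_iff (myEquiv : MvPolynomial (Fin 2) ℂ ≃+* Polynomial (Polynomial ℂ))]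
  have : myEquiv ((MvPolynomial.X 0 - MvPolynomial.X 1 + 1) * (MvPolynomial.X 0 + MvPolynomial.X 1 + 1) + 1)
      = (Polynomial.X - Polynomial.C Polynomial.X + 1) * (Polynomial.X + Polynomial.C Polynomial.X + 1) + 1 := by
    push_cast [map_add, map_mul, map_sub, map_one, myEquiv_X0, myEquiv_X1]
    ring
  rw [this]
  exact irred_q


lemma Q_eq : ((MvPolynomial.X 0 - MvPolynomial.X 1 + 1) * (MvPolynomial.X 0 + MvPolynomial.X 1 + 1) : MvPolynomial (Fin 2) ℂ) =
    MvPolynomial.monomial (Finsupp.single 0 2) 1 + MvPolynomial.monomial (Finsupp.single 1 2) (-1)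
      + MvPolynomial.monomial (Finsupp.single 0 1) 2 + MvPolynomial.monomial 0 1 := by
  rw [← MvPolynomial.C_mul_X_pow_eq_monomial (s := (0:Fin 2)) (a := (1:ℂ)) (n := 2),
      ← MvPolynomial.C_mul_X_pow_eq_monomial (s := (1:Fin 2)) (a := (-1:ℂ)) (n := 2),
      ← MvPolynomial.C_mul_X_pow_eq_monomial (s := (0:Fin 2)) (a := (2:ℂ)) (n := 1),
      MvPolynomial.monomial_zero']
  simp only [map_ofNat, map_one, map_neg]
  ring

lemma Q_supp : ((MvPolynomial.X 0 - MvPolynomial.X 1 + 1) * (MvPolynomial.X 0 + MvPolynomial.X 1 + 1) : MvPolynomial (Fin 2) ℂ).support =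
    {Finsupp.single 0 2, Finsupp.single 1 2, Finsupp.single 0 1, 0} := by
  have d12 : (Finsupp.single (0:Fin 2) 2 : Fin 2 →₀ ℕ) ≠ Finsupp.single 1 2 := by
    simp [Finsupp.single_eq_single_iff]
  have d13 : (Finsupp.single (0:Fin 2) 2 : Fin 2 →₀ ℕ) ≠ Finsupp.single 0 1 := by
    simp [Finsupp.single_eq_single_iff]
  have d14 : (Finsupp.single (0:Fin 2) 2 : Fin 2 →₀ ℕ) ≠ 0 := by simp
  have d23 : (Finsupp.single (1:Fin 2) 2 : Fin 2 →₀ ℕ) ≠ Finsupp.single 0 1 := by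
    simp [Finsupp.single_eq_single_iff]
  have d24 : (Finsupp.single (1:Fin 2) 2 : Fin 2 →₀ ℕ) ≠ 0 := by simp
  have d34 : (Finsupp.single (0:Fin 2) 1 : Fin 2 →₀ ℕ) ≠ 0 := by simp
  rw [Q_eq]
  ext m
  rw [MvPolynomial.mem_support_iff]
  simp only [MvPolynomial.coeff_add, MvPolynomial.coeff_monomial, Finset.mem_insert,
    Finset.mem_singleton]
  split_ifs with h1 h2 h3 h4 <;> simp_all <;> tauto

lemma P_supp : ((MvPolynomial.X 0 - MvPolynomial.X 1 + 1) * (MvPolynomial.X 0 + MvPolynomial.X 1 + 1) + 1 : MvPolynomial (Fin 2) ℂ).support =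
    ((MvPolynomial.X 0 - MvPolynomial.X 1 + 1) * (MvPolynomial.X 0 + MvPolynomial.X 1 + 1) : MvPolynomial (Fin 2) ℂ).support := by
  have hc : MvPolynomial.coeff 0 ((MvPolynomial.X 0 - MvPolynomial.X 1 + 1) * (MvPolynomial.X 0 + MvPolynomial.X 1 + 1) : MvPolynomial (Fin 2) ℂ) = 1 := by
    rw [Q_eq]
    simp [MvPolynomial.coeff_monomial, Finsupp.single_eq_zero]
  ext m
  rw [MvPolynomial.mem_support_iff, MvPolynomial.mem_support_iff]
  rw [MvPolynomial.coeff_add, MvPolynomial.coeff_one]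
  by_cases hm : (0 : Fin 2 →₀ ℕ) = m
  · rw [← hm, hc]; norm_num
  · simp [hm]

section ConvexPart
open Pointwise

lemma img_supp : ((fun m : Fin 2 →₀ ℕ => fun i : Fin 2 => (m i : ℝ)) ''
    (({Finsupp.single 0 2, Finsupp.single 1 2, Finsupp.single 0 1, 0} : Finset (Fin 2 →₀ ℕ)) : Set (Fin 2 →₀ ℕ)))
    = {![2,0], ![0,2], ![1,0], ![0,0]} := by
  have c1 : (fun i : Fin 2 => (((Finsupp.single 0 2 : Fin 2 →₀ ℕ)) i : ℝ)) = ![2,0] := by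
    funext i; fin_cases i <;> simp [Finsupp.single_apply]
  have c2 : (fun i : Fin 2 => (((Finsupp.single 1 2 : Fin 2 →₀ ℕ)) i : ℝ)) = ![0,2] := by
    funext i; fin_cases i <;> simp [Finsupp.single_apply]
  have c3 : (fun i : Fin 2 => (((Finsupp.single 0 1 : Fin 2 →₀ ℕ)) i : ℝ)) = ![1,0] := by
    funext i; fin_cases i <;> simp [Finsupp.single_apply]
  have c4 : (fun i : Fin 2 => (((0 : Fin 2 →₀ ℕ)) i : ℝ)) = ![0,0] := by
    funext i; fin_cases i <;> simp
  simp only [Finset.coe_insert, Finset.coe_singleton, Set.image_insert_eq, Set.image_singleton,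
    c1, c2, c3, c4]

def Tset : Set (Fin 2 → ℝ) := {![0,0], ![2,0], ![0,2]}
def T1set : Set (Fin 2 → ℝ) := {![0,0], ![1,0], ![0,1]}

lemma mem_half (x y z : Fin 2 → ℝ) (s : Set (Fin 2 → ℝ)) (hx : x ∈ s) (hy : y ∈ s)
    (hz : (1/2 : ℝ) • x + (1/2 : ℝ) • y = z) : z ∈ convexHull ℝ s :=
  (convex_convexHull ℝ s).segment_subset (subset_convexHull ℝ s hx) (subset_convexHull ℝ s hy)
    ⟨1/2, 1/2, by norm_num, by norm_num, by norm_num, hz⟩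

lemma conv_S1 : convexHull ℝ ({![2,0], ![0,2], ![1,0], ![0,0]} : Set (Fin 2 → ℝ)) =
    convexHull ℝ Tset := by
  apply le_antisymm
  · apply convexHull_min _ (convex_convexHull ℝ Tset)
    rintro x (rfl | rfl | rfl | rfl)
    · exact subset_convexHull ℝ _ (by simp [Tset])
    · exact subset_convexHull ℝ _ (by simp [Tset])
    · exact mem_half ![0,0] ![2,0] _ _ (by simp [Tset]) (by simp [Tset])
        (by funext i; fin_cases i <;> norm_num)
    · exact subset_convexHull ℝ _ (by simp [Tset])
  · exact convexHull_mono (by intro x hx; rcases hx with rfl | rfl | rfl <;> simp [Tset])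

lemma two_smul_T1 : (2:ℝ) • T1set = Tset := by
  have c1 : (2:ℝ) • (![0,0] : Fin 2 → ℝ) = ![0,0] := by funext i; fin_cases i <;> norm_num
  have c2 : (2:ℝ) • (![1,0] : Fin 2 → ℝ) = ![2,0] := by funext i; fin_cases i <;> norm_num
  have c3 : (2:ℝ) • (![0,1] : Fin 2 → ℝ) = ![0,2] := by funext i; fin_cases i <;> norm_num
  simp only [T1set, Tset, Set.smul_set_insert, Set.smul_set_singleton, c1, c2, c3]

lemma convT1_add : convexHull ℝ T1set + convexHull ℝ T1set = convexHull ℝ Tset := by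
  have hconv : Convex ℝ (convexHull ℝ T1set) := convex_convexHull ℝ T1set
  have h := hconv.add_smul (by norm_num : (0:ℝ) ≤ 1) (by norm_num : (0:ℝ) ≤ 1)
  rw [one_smul] at h
  calc convexHull ℝ T1set + convexHull ℝ T1set = ((1:ℝ)+1) • convexHull ℝ T1set := h.symm
    _ = (2:ℝ) • convexHull ℝ T1set := by norm_num
    _ = convexHull ℝ ((2:ℝ) • T1set) := (convexHull_smul 2 T1set).symm
    _ = convexHull ℝ Tset := by rw [two_smul_T1]

def Aset : Finset (Fin 2 → ℕ) := {![0,0], ![1,0], ![0,1]}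

lemma img_A : ((fun m : Fin 2 → ℕ => fun i : Fin 2 => (m i : ℝ)) '' (Aset : Set (Fin 2 → ℕ)))
    = T1set := by
  have c1 : (fun i : Fin 2 => ((![0,0] : Fin 2 → ℕ) i : ℝ)) = ![0,0] := by
    funext i; fin_cases i <;> simp
  have c2 : (fun i : Fin 2 => ((![1,0] : Fin 2 → ℕ) i : ℝ)) = ![1,0] := by
    funext i; fin_cases i <;> simp
  have c3 : (fun i : Fin 2 => ((![0,1] : Fin 2 → ℕ) i : ℝ)) = ![0,1] := by
    funext i; fin_cases i <;> simp
  simp only [Aset, T1set, Finset.coe_insert, Finset.coe_singleton, Set.image_insert_eq,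
    Set.image_singleton, c1, c2, c3]

lemma card_A : 2 ≤ Aset.card :=
  Finset.one_lt_card.mpr ⟨![0,0], by simp [Aset], ![1,0], by simp [Aset],
    by intro h; have := congrFun h 0; simp at this⟩

end ConvexPart

theorem stmt2 :
    Irreducible ((X 0 - X 1 + 1) * (X 0 + X 1 + 1) + 1 : MvPolynomial (Fin 2) ℂ) ∧
    newtonPolytope ((X 0 - X 1 + 1) * (X 0 + X 1 + 1) + 1 : MvPolynomial (Fin 2) ℂ) =
      newtonPolytope ((X 0 - X 1 + 1) * (X 0 + X 1 + 1) : MvPolynomial (Fin 2) ℂ) ∧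
    IsSummable (newtonPolytope ((X 0 - X 1 + 1) * (X 0 + X 1 + 1) : MvPolynomial (Fin 2) ℂ)) := by
  refine ⟨irred_P, ?_, ?_⟩
  · unfold newtonPolytope
    rw [P_supp]
  · have hN : newtonPolytope ((X 0 - X 1 + 1) * (X 0 + X 1 + 1) : MvPolynomial (Fin 2) ℂ)
        = convexHull ℝ Tset := by
      unfold newtonPolytope
      rw [Q_supp, img_supp, conv_S1]
    refine ⟨Aset, Aset, card_A, card_A, ?_⟩
    rw [hN, img_A, ← convT1_add]
end

section
/- Let k be an algebraically closed field and p, q positive coprime integers. Then for every t* ∈ k, the polynomial x^p - y^q - t* is irreducible in k[x,y] (i.e., the spectrum of x^p - y^q - t is empty). -/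
open MvPolynomial

private lemma ratfunc_intDegree_pow {F : Type*} [Field F] (x : RatFunc F) (hx : x ≠ 0) (n : ℕ) :
    (x ^ n).intDegree = n * x.intDegree := by
  induction n with
  | zero => simp [RatFunc.intDegree_one]
  | succ n ih =>
    rw [pow_succ, RatFunc.intDegree_mul (pow_ne_zero _ hx) hx, ih]
    push_cast; ring

set_option maxHeartbeats 800000 in
set_option synthInstance.maxHeartbeats 400000 in
open IntermediateField in
private lemma aux1 {F : Type*} [Field F] (p q : ℕ) (hp : 0 < p) (hpq : Nat.Coprime p q)
    (a : RatFunc F) (ha : a ≠ 0) (hdeg : a.intDegree = q) :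
    Irreducible (Polynomial.X ^ p - Polynomial.C a : Polynomial (RatFunc F)) := by
  set f : Polynomial (RatFunc F) := Polynomial.X ^ p - Polynomial.C a with hf
  obtain ⟨β, hβ⟩ : ∃ β : AlgebraicClosure (RatFunc F),
      β ^ p = algebraMap (RatFunc F) _ a :=
    IsAlgClosed.exists_pow_nat_eq _ hp
  have hfm : f.Monic := Polynomial.monic_X_pow_sub_C a hp.ne'
  have hf0 : f ≠ 0 := hfm.ne_zero
  have hβroot : Polynomial.aeval β f = 0 := by
    simp [hf, hβ]
  have hint : IsIntegral (RatFunc F) β := ⟨f, hfm, by rwa [Polynomial.aeval_def] at hβroot⟩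
  have hfd : FiniteDimensional (RatFunc F) (RatFunc F)⟮β⟯ := adjoin.finiteDimensional hint
  have hbp : (AdjoinSimple.gen (RatFunc F) β) ^ p
      = algebraMap (RatFunc F) (RatFunc F)⟮β⟯ a := by
    apply Subtype.coe_injective
    push_cast
    exact hβ
  have hN : (Algebra.norm (RatFunc F) (AdjoinSimple.gen (RatFunc F) β)) ^ p
      = a ^ (Module.finrank (RatFunc F) (RatFunc F)⟮β⟯) := by
    rw [← map_pow, hbp, Algebra.norm_algebraMap]
  set d := Module.finrank (RatFunc F) (RatFunc F)⟮β⟯ with hd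
  set N := Algebra.norm (RatFunc F) (AdjoinSimple.gen (RatFunc F) β) with hNdef
  have hN0 : N ≠ 0 := by
    intro h
    rw [h, zero_pow hp.ne'] at hN
    exact pow_ne_zero d ha hN.symm
  have h1 : (p : ℤ) * N.intDegree = (d : ℤ) * q := by
    have h2 := congrArg RatFunc.intDegree hN
    rwa [ratfunc_intDegree_pow _ hN0, ratfunc_intDegree_pow _ ha, hdeg] at h2
  have hpd : p ∣ d := by
    have h3 : (p : ℤ) ∣ ((d * q : ℕ) : ℤ) := by
      push_cast
      exact ⟨N.intDegree, h1.symm⟩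
    exact hpq.dvd_of_dvd_mul_right (Int.natCast_dvd_natCast.mp h3)
  have hdvd : minpoly (RatFunc F) β ∣ f := minpoly.dvd _ β (by simpa using hβroot)
  have hdmin : d = (minpoly (RatFunc F) β).natDegree := adjoin.finrank hint
  have hfdeg : f.natDegree = p := Polynomial.natDegree_X_pow_sub_C
  have hdle : d ≤ p := by
    rw [hdmin, ← hfdeg]
    exact Polynomial.natDegree_le_of_dvd hdvd hf0
  have hd0 : 0 < d := Module.finrank_pos
  have hdp : d = p := le_antisymm hdle (Nat.le_of_dvd hd0 hpd)
  have heq : f = minpoly (RatFunc F) β := by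
    obtain ⟨c, hc⟩ := hdvd
    have hc0 : c ≠ 0 := by
      intro h; rw [h, mul_zero] at hc; exact hf0 hc
    have hcdeg : c.natDegree = 0 := by
      have h4 := congrArg Polynomial.natDegree hc
      rw [Polynomial.natDegree_mul (minpoly.ne_zero hint) hc0, hfdeg, ← hdmin, hdp] at h4
      omega
    have hclead : c.leadingCoeff = 1 := by
      have h5 := congrArg Polynomial.leadingCoeff hc
      rw [Polynomial.leadingCoeff_mul, (minpoly.monic hint).leadingCoeff, one_mul] at h5
      rw [← h5, hfm.leadingCoeff]
    have h7 : c.coeff 0 = 1 := by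
      rw [← hcdeg, Polynomial.coeff_natDegree, hclead]
    have hc1 : c = 1 := by
      rw [Polynomial.eq_C_of_natDegree_eq_zero hcdeg, h7, map_one]
    rw [hc, hc1, mul_one]
  rw [heq]
  exact minpoly.irreducible hint

private lemma aux2 {F : Type*} [Field F] (p q : ℕ) (hp : 0 < p) (hq : 0 < q)
    (hpq : Nat.Coprime p q) (t : F) :
    Irreducible (Polynomial.X ^ p - Polynomial.C (Polynomial.X ^ q + Polynomial.C t) :
      Polynomial (Polynomial F)) := by
  have hmonic : (Polynomial.X ^ p - Polynomial.C (Polynomial.X ^ q + Polynomial.C t) :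
      Polynomial (Polynomial F)).Monic := Polynomial.monic_X_pow_sub_C _ hp.ne'
  rw [hmonic.irreducible_iff_irreducible_map_fraction_map (K := RatFunc F)]
  have hmap : (Polynomial.X ^ p - Polynomial.C (Polynomial.X ^ q + Polynomial.C t) :
      Polynomial (Polynomial F)).map (algebraMap (Polynomial F) (RatFunc F))
      = Polynomial.X ^ p
        - Polynomial.C (algebraMap (Polynomial F) (RatFunc F)
            (Polynomial.X ^ q + Polynomial.C t)) := by
    simp [Polynomial.map_sub, Polynomial.map_pow]
  rw [hmap]
  refine aux1 p q hp hpq _ ?_ ?_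
  · exact (map_ne_zero_iff _ (IsFractionRing.injective (Polynomial F) (RatFunc F))).mpr
      (Polynomial.X_pow_add_C_ne_zero hq t)
  · rw [RatFunc.intDegree_polynomial]
    exact_mod_cast Polynomial.natDegree_X_pow_add_C

theorem stmt3 {k : Type*} [Field k] [IsAlgClosed k] (p q : ℕ) (hp : 0 < p) (hq : 0 < q)
    (hpq : Nat.Coprime p q) (t : k) :
    Irreducible (X 0 ^ p - X 1 ^ q - C t : MvPolynomial (Fin 2) k) := by
  let e3 : MvPolynomial (Fin 0) k ≃ₐ[k] k := MvPolynomial.isEmptyAlgEquiv k (Fin 0)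
  let E : MvPolynomial (Fin 2) k ≃ₐ[k] Polynomial (Polynomial k) :=
    (MvPolynomial.finSuccEquiv k 1).trans
      (Polynomial.mapAlgEquiv ((MvPolynomial.finSuccEquiv k 0).trans (Polynomial.mapAlgEquiv e3)))
  have hX0 : E (X 0) = Polynomial.X := by
    simp [E, MvPolynomial.finSuccEquiv_X_zero]
  have hX1 : E (X 1) = Polynomial.C Polynomial.X := by
    have h1 : (1 : Fin 2) = Fin.succ 0 := rfl
    rw [show E (X 1) = (Polynomial.mapAlgEquiv ((MvPolynomial.finSuccEquiv k 0).trans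
      (Polynomial.mapAlgEquiv e3))) (MvPolynomial.finSuccEquiv k 1 (X 1)) from rfl, h1,
      MvPolynomial.finSuccEquiv_X_succ, Polynomial.coe_mapAlgEquiv, Polynomial.map_C]
    simp [MvPolynomial.finSuccEquiv_X_zero]
  have hC : E (C t) = Polynomial.C (Polynomial.C t) := by
    rw [show (C t : MvPolynomial (Fin 2) k) = algebraMap k _ t from rfl, AlgEquiv.commutes,
      Polynomial.algebraMap_apply, Polynomial.algebraMap_apply]
    simp
  have hE : E (X 0 ^ p - X 1 ^ q - C t)
      = (Polynomial.X ^ p - Polynomial.C (Polynomial.X ^ q + Polynomial.C t)) := by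
    rw [map_sub, map_sub, map_pow, map_pow, hX0, hX1, hC, ← Polynomial.C_pow, map_add]
    ring
  exact (MulEquiv.irreducible_iff
    (E : MvPolynomial (Fin 2) k ≃* Polynomial (Polynomial k))).mp (hE ▸ aux2 p q hp hq hpq t)
end

section
/- Let k be an algebraically closed field, d ≥ 2, and t1*, ..., t_{d-1}* ∈ k distinct. The polynomial P(x,y) = y(x - t1*)···(x - t_{d-1}*) + x is indecomposable: P cannot be written as h(A(x,y)) with A ∈ k[x,y] and h ∈ k[u] of degree ≥ 2. -/
open MvPolynomial

theorem stmt6 {k : Type*} [Field k] [IsAlgClosed k] (d : ℕ) (hd : 2 ≤ d)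
    (t : Fin (d - 1) → k) (ht : Function.Injective t) :
    ¬ ∃ (h : Polynomial k) (A : MvPolynomial (Fin 2) k), 2 ≤ h.natDegree ∧
      (X 1 * ∏ j, (X 0 - C (t j)) + X 0 : MvPolynomial (Fin 2) k) = Polynomial.aeval A h := by
  rintro ⟨h, A, hdeg, hP⟩
  -- move to Polynomial (MvPolynomial (Fin 1) k) with y = X 1 as the outer variable
  set F : MvPolynomial (Fin 2) k →ₐ[k] Polynomial (MvPolynomial (Fin 1) k) :=
    (finSuccEquiv k 1).toAlgHom.comp (rename (Equiv.swap (0 : Fin 2) 1)) with hF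
  have hF0 : F (X 0) = Polynomial.C (X 0) := by
    have h1 : F (X 0) = finSuccEquiv k 1 (X ((0 : Fin 1).succ)) := by
      simp [hF]
    rw [h1, finSuccEquiv_X_succ]
  have hF1 : F (X 1) = Polynomial.X := by
    simp [hF, Equiv.swap_apply_right, finSuccEquiv_X_zero]
  have hprod : (∏ j, ((X 0 : MvPolynomial (Fin 1) k) - C (t j))) ≠ 0 := by
    apply Finset.prod_ne_zero_iff.2
    intro j _
    intro hzero
    rw [sub_eq_zero] at hzero
    have := congrArg (MvPolynomial.coeff (Finsupp.single (0 : Fin 1) 1)) hzero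
    simp [MvPolynomial.coeff_X, MvPolynomial.coeff_C, eq_comm, Finsupp.single_eq_zero] at this
  -- natDegree of F P is 1
  have hFP : F (X 1 * ∏ j, (X 0 - C (t j)) + X 0) =
      Polynomial.X * Polynomial.C (∏ j, ((X 0 : MvPolynomial (Fin 1) k) - C (t j))) +
        Polynomial.C (X 0) := by
    rw [map_add, map_mul, hF1, hF0, map_prod, map_prod]
    congr 1
    congr 1
    apply Finset.prod_congr rfl
    intro j _
    rw [map_sub, hF0]
    congr 1
    simp [hF]
  have hdeg1 : (F (X 1 * ∏ j, (X 0 - C (t j)) + X 0)).natDegree = 1 := by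
    rw [hFP]
    rw [Polynomial.natDegree_add_C]
    rw [mul_comm, Polynomial.natDegree_C_mul hprod, Polynomial.natDegree_X]
  -- natDegree of F (aeval A h) is h.natDegree * (F A).natDegree
  have hcomp : F (Polynomial.aeval A h) = Polynomial.aeval (F A) h :=
    (Polynomial.aeval_algHom_apply F A h).symm
  have haev : Polynomial.aeval (F A) h =
      (h.map (algebraMap k (MvPolynomial (Fin 1) k))).comp (F A) := by
    rw [Polynomial.comp_eq_aeval]
    rw [Polynomial.aeval_def, Polynomial.aeval_def, Polynomial.eval₂_map]
    rfl
  have hdeg2 : (F (Polynomial.aeval A h)).natDegree =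
      h.natDegree * (F A).natDegree := by
    rw [hcomp, haev, Polynomial.natDegree_comp,
      Polynomial.natDegree_map_eq_of_injective
        (algebraMap k (MvPolynomial (Fin 1) k)).injective]
  rw [hP, hdeg2] at hdeg1
  have h1 : h.natDegree ∣ 1 := Dvd.intro _ hdeg1
  have := Nat.le_of_dvd one_pos h1
  omega
end

section
/- (Gao's first criterion) Let P ∈ k[x1,...,xℓ] be a polynomial whose Newton polytope Γ(P) is contained in an affine hyperplane H ⊂ ℝ^ℓ not passing through the origin. Let v1, ..., vk be the vertices of Γ(P). Then Γ₀(P), the convex hull of supp(P) ∪ {0}, is not summable if and only if the gcd of all coordinates of all the vertices v1, ..., vk equals 1. -/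
open MvPolynomial Pointwise

/-- `Γ₀(P)`: the convex hull of the support of `P` together with the origin. -/
noncomputable def newtonPolytope0 {l : ℕ} {k : Type*} [CommSemiring k]
    (P : MvPolynomial (Fin l) k) : Set (Fin l → ℝ) :=
  convexHull ℝ (insert 0 ((fun m : Fin l →₀ ℕ => fun i : Fin l => (m i : ℝ)) ''
    (P.support : Set (Fin l →₀ ℕ))))

/-- The gcd of all coordinates of all vertices (extreme points) of `Γ` equals `1`. -/
def VertexGcdOne {l : ℕ} (Γ : Set (Fin l → ℝ)) : Prop :=
  ∀ d : ℕ, (∀ v ∈ Set.extremePoints ℝ Γ, ∀ i : Fin l, ∃ n : ℤ, v i = (d : ℝ) * n) → d = 1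

section GaoHelpers
open Set

lemma maxOn' (X : Finset (Fin l → ℝ)) (hX : X.Nonempty) (f : (Fin l → ℝ) →ₗ[ℝ] ℝ) :
    ∀ x ∈ convexHull ℝ (X : Set (Fin l → ℝ)), f x ≤ X.sup' hX f := by
  intro x hx
  have h : convexHull ℝ (X : Set (Fin l → ℝ)) ⊆ {y | f y ≤ X.sup' hX f} :=
    convexHull_min (fun y hy => Finset.le_sup' f hy)
      (convex_halfSpace_le (LinearMap.isLinear f) _)
  exact h hx

lemma face_eq (X : Finset (Fin l → ℝ)) (hX : X.Nonempty) (f : (Fin l → ℝ) →ₗ[ℝ] ℝ) :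
    {x ∈ convexHull ℝ (X : Set (Fin l → ℝ)) | f x = X.sup' hX f} =
      convexHull ℝ ((X.filter (fun x => f x = X.sup' hX f)) : Set (Fin l → ℝ)) := by
  set M := X.sup' hX f with hM
  apply Set.Subset.antisymm
  · rintro x ⟨hx, hfx⟩
    rw [Finset.convexHull_eq] at hx
    obtain ⟨w, hw0, hw1, hwx⟩ := hx
    rw [Finset.centerMass_eq_of_sum_1 _ _ hw1] at hwx
    have hle : ∀ y ∈ X, f y ≤ M := fun y hy => Finset.le_sup' f hy
    have hkey : ∀ y ∈ X, w y ≠ 0 → f y = M := by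
      intro y hy hwy
      by_contra hne
      have hlt : f y < M := lt_of_le_of_ne (hle y hy) hne
      have hwpos : 0 < w y := lt_of_le_of_ne (hw0 y hy) (Ne.symm hwy)
      have hsum : ∑ z ∈ X, w z * f z < ∑ z ∈ X, w z * M := by
        apply Finset.sum_lt_sum
        · intro z hz; exact mul_le_mul_of_nonneg_left (hle z hz) (hw0 z hz)
        · exact ⟨y, hy, by nlinarith⟩
      have h1 : ∑ z ∈ X, w z * M = M := by rw [← Finset.sum_mul, hw1, one_mul]
      have h2 : f x = ∑ z ∈ X, w z * f z := by
        rw [← hwx]; simp [map_sum, map_smul, smul_eq_mul]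
      rw [hfx] at h2
      linarith [hsum, h1]
    rw [Finset.convexHull_eq]
    refine ⟨w, fun y hy => hw0 y (Finset.mem_filter.1 hy).1, ?_, ?_⟩
    · rw [← hw1]
      apply Finset.sum_subset (Finset.filter_subset _ _)
      intro y hy hny
      by_contra h0
      exact hny (Finset.mem_filter.2 ⟨hy, hkey y hy h0⟩)
    · rw [Finset.centerMass_eq_of_sum_1]
      · rw [← hwx]
        apply Finset.sum_subset (Finset.filter_subset _ _)
        intro y hy hny
        have : w y = 0 := by
          by_contra h0
          exact hny (Finset.mem_filter.2 ⟨hy, hkey y hy h0⟩)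
        simp [this]
      · rw [← hw1]
        apply Finset.sum_subset (Finset.filter_subset _ _)
        intro y hy hny
        by_contra h0
        exact hny (Finset.mem_filter.2 ⟨hy, hkey y hy h0⟩)
  · intro x hx
    have hsub : (X.filter (fun x => f x = M) : Set (Fin l → ℝ)) ⊆ (X : Set (Fin l → ℝ)) := by
      intro y hy; exact Finset.mem_coe.2 (Finset.mem_of_mem_filter _ (Finset.mem_coe.1 hy))
    constructor
    · exact convexHull_mono hsub hx
    · have h : convexHull ℝ ((X.filter (fun x => f x = M)) : Set (Fin l → ℝ)) ⊆ {y | f y = M} := by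
        apply convexHull_min
        · intro y hy
          exact (Finset.mem_filter.1 (Finset.mem_coe.1 hy)).2
        · exact convex_hyperplane (LinearMap.isLinear f) _
      exact h hx


lemma supeq (X Y Z : Finset (Fin l → ℝ)) (hX : X.Nonempty) (hY : Y.Nonempty) (hZ : Z.Nonempty)
    (h : convexHull ℝ (Z : Set (Fin l → ℝ)) =
      convexHull ℝ (X : Set (Fin l → ℝ)) + convexHull ℝ (Y : Set (Fin l → ℝ)))
    (f : (Fin l → ℝ) →ₗ[ℝ] ℝ) :
    Z.sup' hZ f = X.sup' hX f + Y.sup' hY f := by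
  apply le_antisymm
  · obtain ⟨z, hz, hfz⟩ := Finset.exists_mem_eq_sup' hZ f
    have hz' : z ∈ convexHull ℝ (X : Set (Fin l → ℝ)) + convexHull ℝ (Y : Set (Fin l → ℝ)) := by
      rw [← h]; exact subset_convexHull ℝ _ hz
    obtain ⟨p, hp, q, hq, hpq⟩ := Set.mem_add.1 hz'
    rw [hfz, ← hpq, map_add]
    exact add_le_add (maxOn' X hX f p hp) (maxOn' Y hY f q hq)
  · obtain ⟨x, hx, hfx⟩ := Finset.exists_mem_eq_sup' hX f
    obtain ⟨y, hy, hfy⟩ := Finset.exists_mem_eq_sup' hY f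
    have : x + y ∈ convexHull ℝ (Z : Set (Fin l → ℝ)) := by
      rw [h]
      exact Set.add_mem_add (subset_convexHull ℝ _ hx) (subset_convexHull ℝ _ hy)
    have := maxOn' Z hZ f _ this
    rw [map_add] at this
    rw [hfx, hfy]; exact this

lemma sumface (X Y : Finset (Fin l → ℝ)) (hX : X.Nonempty) (hY : Y.Nonempty)
    (f : (Fin l → ℝ) →ₗ[ℝ] ℝ) :
    {z ∈ convexHull ℝ (X : Set (Fin l → ℝ)) + convexHull ℝ (Y : Set (Fin l → ℝ)) |
        f z = X.sup' hX f + Y.sup' hY f} =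
      {x ∈ convexHull ℝ (X : Set (Fin l → ℝ)) | f x = X.sup' hX f} +
      {y ∈ convexHull ℝ (Y : Set (Fin l → ℝ)) | f y = Y.sup' hY f} := by
  apply Set.Subset.antisymm
  · rintro z ⟨hz, hfz⟩
    obtain ⟨p, hp, q, hq, hpq⟩ := Set.mem_add.1 hz
    have h1 : f p ≤ X.sup' hX f := maxOn' X hX f p hp
    have h2 : f q ≤ Y.sup' hY f := maxOn' Y hY f q hq
    have h3 : f p + f q = X.sup' hX f + Y.sup' hY f := by rw [← map_add, hpq, hfz]
    exact Set.mem_add.2 ⟨p, ⟨hp, by linarith⟩, q, ⟨hq, by linarith⟩, hpq⟩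
  · rintro z hz
    obtain ⟨p, ⟨hp, hfp⟩, q, ⟨hq, hfq⟩, hpq⟩ := Set.mem_add.1 hz
    refine ⟨?_, by rw [← hpq, map_add, hfp, hfq]⟩
    rw [← hpq]
    exact Set.add_mem_add hp hq


set_option maxHeartbeats 2000000 in
lemma hard (S A B : Finset (Fin l → ℝ)) (hS : S.Nonempty)
    (W : (Fin l → ℝ) →ₗ[ℝ] ℝ) (c : ℝ) (hc : 0 < c)
    (hSW : ∀ x ∈ S, W x = c)
    (hSlat : ∀ x ∈ S, ∀ i, ∃ n : ℕ, x i = n)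
    (hAlat : ∀ x ∈ A, ∀ i, ∃ n : ℕ, x i = n)
    (hBlat : ∀ x ∈ B, ∀ i, ∃ n : ℕ, x i = n)
    (hA2 : 2 ≤ A.card) (hB2 : 2 ≤ B.card)
    (hsum : convexHull ℝ ((insert (0 : Fin l → ℝ) S : Finset (Fin l → ℝ)) : Set (Fin l → ℝ)) =
      convexHull ℝ (A : Set (Fin l → ℝ)) + convexHull ℝ (B : Set (Fin l → ℝ))) :
    ∃ d : ℕ, d ≠ 1 ∧ ∀ v ∈ Set.extremePoints ℝ (convexHull ℝ (S : Set (Fin l → ℝ))),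
      ∀ i, ∃ n : ℤ, v i = (d : ℝ) * n := by
  classical
  set EP := Set.extremePoints ℝ (convexHull ℝ (S : Set (Fin l → ℝ))) with hEPdef
  rcases Set.eq_empty_or_nonempty EP with hEP | ⟨v₀, hv₀⟩
  · refine ⟨0, by norm_num, ?_⟩
    intro v hv
    rw [hEP] at hv
    exact absurd hv (Set.notMem_empty v)
  set T : Finset (Fin l → ℝ) := insert 0 S with hTdef
  have hT : T.Nonempty := ⟨0, Finset.mem_insert_self _ _⟩
  have hA : A.Nonempty := Finset.card_pos.1 (by omega)
  have hB : B.Nonempty := Finset.card_pos.1 (by omega)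
  have hAnn : ∀ x ∈ A, ∀ i, (0:ℝ) ≤ x i := by
    intro x hx i; obtain ⟨n, hn⟩ := hAlat x hx i; rw [hn]; positivity
  have hBnn : ∀ x ∈ B, ∀ i, (0:ℝ) ≤ x i := by
    intro x hx i; obtain ⟨n, hn⟩ := hBlat x hx i; rw [hn]; positivity
  have zsum : ∀ a b : Fin l → ℝ, (∀ i, (0:ℝ) ≤ a i) → (∀ i, (0:ℝ) ≤ b i) → a + b = 0 →
      a = 0 ∧ b = 0 := by
    intro a b ha hb hab
    constructor <;> [skip; skip] <;>
    · funext i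
      have := congrFun hab i
      simp only [Pi.add_apply, Pi.zero_apply] at this
      have h1 := ha i; have h2 := hb i
      simp only [Pi.zero_apply]
      linarith
  -- sup of W over T
  have supW_T : T.sup' hT W = c := by
    apply le_antisymm
    · apply Finset.sup'_le
      intro x hx
      rcases Finset.mem_insert.1 hx with rfl | hxS
      · rw [map_zero]; exact hc.le
      · rw [hSW x hxS]
    · obtain ⟨s, hs⟩ := hS
      calc c = W s := (hSW s hs).symm
      _ ≤ _ := Finset.le_sup' W (Finset.mem_insert_of_mem hs)
  have supnW_T : T.sup' hT (-W) = 0 := by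
    apply le_antisymm
    · apply Finset.sup'_le
      intro x hx
      rcases Finset.mem_insert.1 hx with rfl | hxS
      · simp
      · rw [LinearMap.neg_apply, hSW x hxS]; linarith
    · have : (-W) (0 : Fin l → ℝ) = 0 := by simp
      rw [← this]
      exact Finset.le_sup' (-W) (Finset.mem_insert_self _ _)

  -- the (-W)-filter of T is {0}
  have filter0 : T.filter (fun x => (-W) x = T.sup' hT (-W)) = {0} := by
    ext x
    simp only [Finset.mem_filter, Finset.mem_singleton, supnW_T]
    constructor
    · rintro ⟨hx, hx0⟩
      rcases Finset.mem_insert.1 hx with rfl | hxS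
      · rfl
      · exfalso
        rw [LinearMap.neg_apply, hSW x hxS] at hx0
        linarith
    · rintro rfl
      exact ⟨Finset.mem_insert_self _ _, by simp⟩
  have face0 : {z ∈ convexHull ℝ (T : Set (Fin l → ℝ)) | (-W) z = T.sup' hT (-W)} = {0} := by
    rw [face_eq T hT (-W), filter0]
    simp
  have hsplitnW := supeq A B T hA hB hT hsum (-W)
  obtain ⟨a0, ha0, hfa0⟩ := Finset.exists_mem_eq_sup' hA (-W)
  obtain ⟨b0, hb0, hfb0⟩ := Finset.exists_mem_eq_sup' hB (-W)
  have hab0 : a0 + b0 = 0 := by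
    have hmem : a0 + b0 ∈ convexHull ℝ (T : Set (Fin l → ℝ)) := by
      rw [hsum]
      exact Set.add_mem_add (subset_convexHull ℝ _ (Finset.mem_coe.2 ha0))
        (subset_convexHull ℝ _ (Finset.mem_coe.2 hb0))
    have hval : (-W) (a0 + b0) = T.sup' hT (-W) := by
      rw [map_add, hsplitnW, ← hfa0, ← hfb0]
    have : a0 + b0 ∈ ({0} : Set (Fin l → ℝ)) := by
      rw [← face0]; exact ⟨hmem, hval⟩
    simpa using this
  obtain ⟨ha0z, hb0z⟩ := zsum a0 b0 (hAnn a0 ha0) (hBnn b0 hb0) hab0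
  have h0A : (0 : Fin l → ℝ) ∈ A := ha0z ▸ ha0
  have h0B : (0 : Fin l → ℝ) ∈ B := hb0z ▸ hb0
  have hsupnWA : A.sup' hA (-W) = 0 := by rw [hfa0, ha0z]; simp
  have hsupnWB : B.sup' hB (-W) = 0 := by rw [hfb0, hb0z]; simp
  have hWAnn : ∀ x ∈ A, (0:ℝ) ≤ W x := by
    intro x hx
    have := Finset.le_sup' (-W) hx
    rw [hsupnWA, LinearMap.neg_apply] at this
    linarith
  have hWBnn : ∀ y ∈ B, (0:ℝ) ≤ W y := by
    intro y hy
    have := Finset.le_sup' (-W) hy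
    rw [hsupnWB, LinearMap.neg_apply] at this
    linarith
  have hApos : ∀ x ∈ A, x ≠ 0 → 0 < W x := by
    intro x hx hxne
    rcases lt_or_eq_of_le (hWAnn x hx) with h | h
    · exact h
    · exfalso
      apply hxne
      have hmem : x ∈ convexHull ℝ (T : Set (Fin l → ℝ)) := by
        rw [hsum]
        have := Set.add_mem_add (subset_convexHull ℝ _ (Finset.mem_coe.2 hx))
          (subset_convexHull ℝ _ (Finset.mem_coe.2 h0B))
        simpa using this
      have : x ∈ ({0} : Set (Fin l → ℝ)) := by
        rw [← face0]
        exact ⟨hmem, by rw [supnW_T, LinearMap.neg_apply, ← h]; norm_num⟩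
      simpa using this
  have hBpos : ∀ y ∈ B, y ≠ 0 → 0 < W y := by
    intro y hy hyne
    rcases lt_or_eq_of_le (hWBnn y hy) with h | h
    · exact h
    · exfalso
      apply hyne
      have hmem : y ∈ convexHull ℝ (T : Set (Fin l → ℝ)) := by
        rw [hsum]
        have := Set.add_mem_add (subset_convexHull ℝ _ (Finset.mem_coe.2 h0A))
          (subset_convexHull ℝ _ (Finset.mem_coe.2 hy))
        simpa using this
      have : y ∈ ({0} : Set (Fin l → ℝ)) := by
        rw [← face0]
        exact ⟨hmem, by rw [supnW_T, LinearMap.neg_apply, ← h]; norm_num⟩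
      simpa using this
  set α := A.sup' hA W with hαdef
  set β := B.sup' hB W with hβdef
  have hαβ : α + β = c := by
    rw [← supW_T, supeq A B T hA hB hT hsum W]
  have hαpos : 0 < α := by
    obtain ⟨x, hx, y, hy, hxy⟩ := Finset.one_lt_card.1 (by omega : 1 < A.card)
    rcases eq_or_ne x 0 with rfl | hxne
    · have : y ≠ 0 := fun h => hxy (h.symm ▸ rfl)
      calc (0:ℝ) < W y := hApos y hy this
      _ ≤ α := Finset.le_sup' W hy
    · calc (0:ℝ) < W x := hApos x hx hxne
      _ ≤ α := Finset.le_sup' W hx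
  have hβpos : 0 < β := by
    obtain ⟨x, hx, y, hy, hxy⟩ := Finset.one_lt_card.1 (by omega : 1 < B.card)
    rcases eq_or_ne x 0 with rfl | hxne
    · have : y ≠ 0 := fun h => hxy (h.symm ▸ rfl)
      calc (0:ℝ) < W y := hBpos y hy this
      _ ≤ β := Finset.le_sup' W hy
    · calc (0:ℝ) < W x := hBpos x hx hxne
      _ ≤ β := Finset.le_sup' W hx
  have hαc : α < c := by linarith
  -- key claim
  have key : ∀ v ∈ EP, (α / c) • v ∈ A := by
    intro v hv
    have hvS : v ∈ S := Finset.mem_coe.1 (extremePoints_convexHull_subset hv)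
    have hvW : W v = c := hSW v hvS
    have hvne : v ≠ (0 : Fin l → ℝ) := by
      intro h
      rw [h, map_zero] at hvW
      exact hc.ne hvW
    have hvT : v ∈ T := Finset.mem_insert_of_mem hvS
    -- separation
    have hvdiff := ((convex_convexHull ℝ (S : Set (Fin l → ℝ))).mem_extremePoints_iff_convex_diff).1 hv
    have hCsub : convexHull ℝ ((S.erase v : Finset (Fin l → ℝ)) : Set (Fin l → ℝ)) ⊆
        convexHull ℝ (S : Set (Fin l → ℝ)) \ {v} := by
      apply convexHull_min _ hvdiff.2
      intro y hy
      obtain ⟨hne, hyS⟩ := Finset.mem_erase.1 (Finset.mem_coe.1 hy)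
      exact ⟨subset_convexHull ℝ _ (Finset.mem_coe.2 hyS), hne⟩
    have hvnC : v ∉ convexHull ℝ ((S.erase v : Finset (Fin l → ℝ)) : Set (Fin l → ℝ)) :=
      fun h => (hCsub h).2 rfl
    obtain ⟨u, r, hur, hrv⟩ := geometric_hahn_banach_closed_point
      (convex_convexHull ℝ _) ((S.erase v).finite_toSet.isClosed_convexHull ℝ) hvnC
    have hus : ∀ s ∈ S, s ≠ v → u s < u v := by
      intro s hsS hsv
      have hmem : s ∈ convexHull ℝ ((S.erase v : Finset (Fin l → ℝ)) : Set (Fin l → ℝ)) :=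
        subset_convexHull ℝ _ (Finset.mem_coe.2 (Finset.mem_erase.2 ⟨hsv, hsS⟩))
      exact lt_trans (hur s hmem) hrv
    set φ : (Fin l → ℝ) →ₗ[ℝ] ℝ := u.toLinearMap - (u v / c) • W with hφdef
    have hφapp : ∀ x, φ x = u x - (u v / c) * W x := by
      intro x
      simp [hφdef, LinearMap.sub_apply, LinearMap.smul_apply, smul_eq_mul]
    have hφv : φ v = 0 := by
      rw [hφapp, hvW]
      field_simp
      ring
    have hφ0 : φ (0 : Fin l → ℝ) = 0 := map_zero φ
    have hφs : ∀ s ∈ S, s ≠ v → φ s < 0 := by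
      intro s hsS hsv
      rw [hφapp, hSW s hsS]
      have : u v / c * c = u v := div_mul_cancel₀ _ hc.ne'
      rw [this]
      linarith [hus s hsS hsv]
    have supφT : T.sup' hT φ = 0 := by
      apply le_antisymm
      · apply Finset.sup'_le
        intro x hx
        rcases Finset.mem_insert.1 hx with rfl | hxS
        · rw [hφ0]
        · rcases eq_or_ne x v with rfl | hxv
          · rw [hφv]
          · exact (hφs x hxS hxv).le
      · rw [← hφ0]
        exact Finset.le_sup' φ (Finset.mem_insert_self _ _)
    have filterφ : T.filter (fun x => φ x = T.sup' hT φ) = {0, v} := by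
      ext x
      simp only [Finset.mem_filter, Finset.mem_insert, Finset.mem_singleton, supφT]
      constructor
      · rintro ⟨hx, hx0⟩
        rcases Finset.mem_insert.1 hx with rfl | hxS
        · exact Or.inl rfl
        · rcases eq_or_ne x v with rfl | hxv
          · exact Or.inr rfl
          · exact absurd hx0 (hφs x hxS hxv).ne
      · rintro (rfl | rfl)
        · exact ⟨Finset.mem_insert_self _ _, hφ0⟩
        · exact ⟨hvT, hφv⟩
    have hVne : ({0, v} : Finset (Fin l → ℝ)).Nonempty := ⟨0, Finset.mem_insert_self _ _⟩
    have faceφT : {z ∈ convexHull ℝ (T : Set (Fin l → ℝ)) | φ z = T.sup' hT φ} =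
        convexHull ℝ (({0, v} : Finset (Fin l → ℝ)) : Set (Fin l → ℝ)) := by
      rw [face_eq T hT φ, filterφ]
    have splitφ := supeq A B T hA hB hT hsum φ
    set F₁ := A.filter (fun x => φ x = A.sup' hA φ) with hF₁def
    set G₁ := B.filter (fun y => φ y = B.sup' hB φ) with hG₁def
    have hF₁ne : F₁.Nonempty := by
      obtain ⟨a, ha, hfa⟩ := Finset.exists_mem_eq_sup' hA φ
      exact ⟨a, Finset.mem_filter.2 ⟨ha, hfa.symm⟩⟩
    have hG₁ne : G₁.Nonempty := by
      obtain ⟨b, hb, hfb⟩ := Finset.exists_mem_eq_sup' hB φ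
      exact ⟨b, Finset.mem_filter.2 ⟨hb, hfb.symm⟩⟩
    have hFGseg : convexHull ℝ (F₁ : Set (Fin l → ℝ)) + convexHull ℝ (G₁ : Set (Fin l → ℝ)) =
        convexHull ℝ (({0, v} : Finset (Fin l → ℝ)) : Set (Fin l → ℝ)) := by
      rw [hF₁def, hG₁def, ← face_eq A hA φ, ← face_eq B hB φ, ← sumface A B hA hB φ,
        ← hsum, ← splitφ, faceφT]
    -- 0 belongs to both F₁ and G₁
    have supnWV : ({0, v} : Finset (Fin l → ℝ)).sup' hVne (-W) = 0 := by
      apply le_antisymm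
      · apply Finset.sup'_le
        intro x hx
        rcases Finset.mem_insert.1 hx with rfl | hx
        · simp
        · rw [Finset.mem_singleton.1 hx, LinearMap.neg_apply, hvW]
          linarith
      · have : (-W) (0 : Fin l → ℝ) = 0 := by simp
        rw [← this]
        exact Finset.le_sup' (-W) (Finset.mem_insert_self _ _)
    have filterV : ({0, v} : Finset (Fin l → ℝ)).filter
        (fun x => (-W) x = ({0, v} : Finset (Fin l → ℝ)).sup' hVne (-W)) = {0} := by
      ext x
      simp only [Finset.mem_filter, Finset.mem_insert, Finset.mem_singleton, supnWV]
      constructor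
      · rintro ⟨hx | hx, hx0⟩
        · exact hx
        · exfalso
          rw [hx, LinearMap.neg_apply, hvW] at hx0
          linarith
      · rintro rfl
        exact ⟨Or.inl rfl, by simp⟩
    have faceV : {z ∈ convexHull ℝ (({0, v} : Finset (Fin l → ℝ)) : Set (Fin l → ℝ)) |
        (-W) z = ({0, v} : Finset (Fin l → ℝ)).sup' hVne (-W)} = {0} := by
      rw [face_eq _ hVne (-W), filterV]
      simp
    have hsplitnW₁ := supeq F₁ G₁ ({0, v} : Finset (Fin l → ℝ)) hF₁ne hG₁ne hVne hFGseg.symm (-W)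
    obtain ⟨a1, ha1, hfa1⟩ := Finset.exists_mem_eq_sup' hF₁ne (-W)
    obtain ⟨b1, hb1, hfb1⟩ := Finset.exists_mem_eq_sup' hG₁ne (-W)
    have hab1 : a1 + b1 = 0 := by
      have hmem : a1 + b1 ∈ convexHull ℝ (({0, v} : Finset (Fin l → ℝ)) : Set (Fin l → ℝ)) := by
        rw [← hFGseg]
        exact Set.add_mem_add (subset_convexHull ℝ _ (Finset.mem_coe.2 ha1))
          (subset_convexHull ℝ _ (Finset.mem_coe.2 hb1))
      have hval : (-W) (a1 + b1) = ({0, v} : Finset (Fin l → ℝ)).sup' hVne (-W) := by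
        rw [map_add, hsplitnW₁, ← hfa1, ← hfb1]
      have : a1 + b1 ∈ ({0} : Set (Fin l → ℝ)) := by rw [← faceV]; exact ⟨hmem, hval⟩
      simpa using this
    have ha1A : a1 ∈ A := Finset.mem_of_mem_filter _ ha1
    have hb1B : b1 ∈ B := Finset.mem_of_mem_filter _ hb1
    obtain ⟨ha1z, hb1z⟩ := zsum a1 b1 (hAnn a1 ha1A) (hBnn b1 hb1B) hab1
    have h0F₁ : (0 : Fin l → ℝ) ∈ F₁ := ha1z ▸ ha1
    have h0G₁ : (0 : Fin l → ℝ) ∈ G₁ := hb1z ▸ hb1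
    -- F₁ sits inside the segment [0, v]
    have hseg : ∀ x ∈ F₁, ∃ t : ℝ, 0 ≤ t ∧ t ≤ 1 ∧ x = t • v := by
      intro x hx
      have hmem : x ∈ convexHull ℝ (({0, v} : Finset (Fin l → ℝ)) : Set (Fin l → ℝ)) := by
        rw [← hFGseg]
        have := Set.add_mem_add (subset_convexHull ℝ _ (Finset.mem_coe.2 hx))
          (subset_convexHull ℝ _ (Finset.mem_coe.2 h0G₁))
        simpa using this
      have hco : (({0, v} : Finset (Fin l → ℝ)) : Set (Fin l → ℝ)) = {0, v} := by simp
      rw [hco, convexHull_pair] at hmem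
      obtain ⟨p, q, hp, hq, hpq, hx'⟩ := hmem
      refine ⟨q, hq, by linarith, ?_⟩
      rw [← hx']
      simp
    obtain ⟨aM, haM, hfaM⟩ := Finset.exists_mem_eq_sup' hF₁ne W
    obtain ⟨tM, htM0, htM1, htMv⟩ := hseg aM haM
    have hWaM : W aM = tM * c := by rw [htMv, map_smul, smul_eq_mul, hvW]
    have htMeq : tM = F₁.sup' hF₁ne W / c := by
      rw [eq_div_iff hc.ne']
      exact (hfaM.trans hWaM).symm
    have hγvF : (F₁.sup' hF₁ne W / c) • v ∈ F₁ := by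
      rw [← htMeq, ← htMv]
      exact haM
    -- epsilon analysis to show γ = α
    set Mφ := A.sup' hA φ with hMφdef
    set Abad := A.filter (fun x => φ x < Mφ) with hAbaddef
    set δ : ℝ := if h : Abad.Nonempty then Abad.inf' h (fun x => Mφ - φ x) else 1 with hδdef
    have hδpos : 0 < δ := by
      rw [hδdef]
      split_ifs with h
      · rw [Finset.lt_inf'_iff]
        intro b hb
        have := (Finset.mem_filter.1 hb).2
        linarith
      · norm_num
    set Abad' := A.filter (fun x => W x < α) with hAbad'def
    set δ' : ℝ := if h : Abad'.Nonempty then Abad'.inf' h (fun x => α - W x) else 1 with hδ'def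
    have hδ'pos : 0 < δ' := by
      rw [hδ'def]
      split_ifs with h
      · rw [Finset.lt_inf'_iff]
        intro b hb
        have := (Finset.mem_filter.1 hb).2
        linarith
      · norm_num
    set R := A.sup' hA φ - A.inf' hA φ with hRdef
    have hRnn : 0 ≤ R := by
      obtain ⟨a, ha⟩ := hA
      have h1 := Finset.inf'_le φ ha
      have h2 := Finset.le_sup' φ ha
      rw [hRdef]; linarith
    set ε₁ : ℝ := δ / (2 * α) with hε₁def
    have hε₁pos : 0 < ε₁ := by positivity
    set ε₂ : ℝ := ε₁ + (R + 1) / δ' with hε₂def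
    have hε₁₂ : ε₁ < ε₂ := by
      rw [hε₂def]
      have : 0 < (R + 1) / δ' := by positivity
      linarith
    have hε₂pos : 0 < ε₂ := lt_trans hε₁pos hε₁₂
    have gen : ∀ ε : ℝ, 0 < ε → ∃ a ∈ A, ∃ b ∈ B, a + b = v ∧
        (∀ x ∈ A, φ x + ε * W x ≤ φ a + ε * W a) ∧
        (∀ y ∈ B, φ y + ε * W y ≤ φ b + ε * W b) := by
      intro ε hε
      set ψ : (Fin l → ℝ) →ₗ[ℝ] ℝ := φ + ε • W with hψdef
      have hψapp : ∀ x, ψ x = φ x + ε * W x := by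
        intro x
        simp [hψdef, LinearMap.add_apply, LinearMap.smul_apply, smul_eq_mul]
      have supψT : T.sup' hT ψ = ε * c := by
        apply le_antisymm
        · apply Finset.sup'_le
          intro x hx
          rw [hψapp]
          rcases Finset.mem_insert.1 hx with rfl | hxS
          · rw [hφ0, map_zero]
            simp only [mul_zero, add_zero]
            positivity
          · rcases eq_or_ne x v with rfl | hxv
            · rw [hφv, hvW]; linarith
            · rw [hSW x hxS]
              have := hφs x hxS hxv
              linarith
        · have : ψ v = ε * c := by rw [hψapp, hφv, hvW]; ring
          rw [← this]
          exact Finset.le_sup' ψ hvT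
      have filterψ : T.filter (fun x => ψ x = T.sup' hT ψ) = {v} := by
        ext x
        simp only [Finset.mem_filter, Finset.mem_singleton, supψT]
        constructor
        · rintro ⟨hx, hx0⟩
          rw [hψapp] at hx0
          rcases Finset.mem_insert.1 hx with rfl | hxS
          · exfalso
            have hpos : (0:ℝ) < ε * c := mul_pos hε hc
            simp only [hφ0, map_zero, mul_zero, add_zero, zero_add] at hx0
            linarith only [hx0, hpos]
          · rcases eq_or_ne x v with rfl | hxv
            · rfl
            · exfalso
              rw [hSW x hxS] at hx0
              have := hφs x hxS hxv
              linarith only [hx0, this]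
        · rintro rfl
          refine ⟨hvT, by rw [hψapp, hφv, hvW]; ring⟩
      have faceψ : {z ∈ convexHull ℝ (T : Set (Fin l → ℝ)) | ψ z = T.sup' hT ψ} = {v} := by
        rw [face_eq T hT ψ, filterψ]
        simp
      have splitψ := supeq A B T hA hB hT hsum ψ
      obtain ⟨a, ha, hfa⟩ := Finset.exists_mem_eq_sup' hA ψ
      obtain ⟨b, hb, hfb⟩ := Finset.exists_mem_eq_sup' hB ψ
      have hab : a + b = v := by
        have hmem : a + b ∈ convexHull ℝ (T : Set (Fin l → ℝ)) := by
          rw [hsum]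
          exact Set.add_mem_add (subset_convexHull ℝ _ (Finset.mem_coe.2 ha))
            (subset_convexHull ℝ _ (Finset.mem_coe.2 hb))
        have hval : ψ (a + b) = T.sup' hT ψ := by
          rw [map_add, splitψ, ← hfa, ← hfb]
        have : a + b ∈ ({v} : Set (Fin l → ℝ)) := by rw [← faceψ]; exact ⟨hmem, hval⟩
        simpa using this
      refine ⟨a, ha, b, hb, hab, ?_, ?_⟩
      · intro x hx
        have := Finset.le_sup' ψ hx
        rw [hfa] at this
        rw [← hψapp, ← hψapp]
        exact this
      · intro y hy
        have := Finset.le_sup' ψ hy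
        rw [hfb] at this
        rw [← hψapp, ← hψapp]
        exact this
    obtain ⟨A1, hA1, B1, hB1, habv1, hmax1A, hmax1B⟩ := gen ε₁ hε₁pos
    obtain ⟨A2, hA2', B2, hB2', habv2, hmax2A, hmax2B⟩ := gen ε₂ hε₂pos
    have hWsum1 : W A1 + W B1 = c := by
      have := congrArg W habv1
      rw [map_add, hvW] at this
      exact this
    have hWsum2 : W A2 + W B2 = c := by
      have := congrArg W habv2
      rw [map_add, hvW] at this
      exact this
    have hWA12 : W A1 = W A2 := by
      have s1 := add_le_add (hmax1A A2 hA2') (hmax2A A1 hA1)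
      have s2 := add_le_add (hmax1B B2 hB2') (hmax2B B1 hB1)
      have kA : 0 ≤ (ε₂ - ε₁) * (W A2 - W A1) := by nlinarith only [s1]
      have kB : 0 ≤ (ε₂ - ε₁) * (W B2 - W B1) := by nlinarith only [s2]
      have hd : 0 < ε₂ - ε₁ := by linarith only [hε₁₂]
      have kA' : 0 ≤ W A2 - W A1 := by
        by_contra hneg
        push_neg at hneg
        nlinarith only [kA, hd, hneg]
      have kB' : 0 ≤ W B2 - W B1 := by
        by_contra hneg
        push_neg at hneg
        nlinarith only [kB, hd, hneg]
      linarith only [kA', kB', hWsum1, hWsum2]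
    have hφA1 : φ A1 = Mφ := by
      by_contra h
      have hlt : φ A1 < Mφ := lt_of_le_of_ne (Finset.le_sup' φ hA1) h
      have hmem : A1 ∈ Abad := Finset.mem_filter.2 ⟨hA1, hlt⟩
      have hne : Abad.Nonempty := ⟨A1, hmem⟩
      have hδle : δ ≤ Mφ - φ A1 := by
        rw [hδdef, dif_pos hne]
        exact Finset.inf'_le _ hmem
      obtain ⟨y, hy, hfy⟩ := Finset.exists_mem_eq_sup' hA φ
      have h1 := hmax1A y hy
      have h2 : 0 ≤ W y := hWAnn y hy
      have h3 : W A1 ≤ α := Finset.le_sup' W hA1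
      have h4 : ε₁ * α = δ / 2 := by
        rw [hε₁def]
        field_simp
      rw [← hfy] at h1
      have m0 : 0 ≤ ε₁ * W y := mul_nonneg hε₁pos.le h2
      have m1 : δ ≤ ε₁ * W A1 := by linarith only [h1, m0, hδle]
      have m2 : ε₁ * W A1 ≤ ε₁ * α := mul_le_mul_of_nonneg_left h3 hε₁pos.le
      linarith only [m1, m2, h4, hδpos]
    have hWA2α : W A2 = α := by
      by_contra h
      have hlt : W A2 < α := lt_of_le_of_ne (Finset.le_sup' W hA2') h
      have hmem : A2 ∈ Abad' := Finset.mem_filter.2 ⟨hA2', hlt⟩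
      have hne : Abad'.Nonempty := ⟨A2, hmem⟩
      have hδle : δ' ≤ α - W A2 := by
        rw [hδ'def, dif_pos hne]
        exact Finset.inf'_le _ hmem
      obtain ⟨y, hy, hfy⟩ := Finset.exists_mem_eq_sup' hA W
      have h1 := hmax2A y hy
      have h2 : φ A2 ≤ A.sup' hA φ := Finset.le_sup' φ hA2'
      have h3 : A.inf' hA φ ≤ φ y := Finset.inf'_le φ hy
      have h5 : (R + 1) / δ' * δ' = R + 1 := div_mul_cancel₀ _ hδ'pos.ne'
      rw [← hfy] at h1
      have m1 : ε₂ * δ' ≤ ε₂ * (α - W A2) := mul_le_mul_of_nonneg_left hδle hε₂pos.le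
      have m2 : ε₂ * (α - W A2) ≤ φ A2 - φ y := by nlinarith only [h1]
      have m3 : ε₂ * δ' = ε₁ * δ' + (R + 1) := by
        rw [hε₂def]
        field_simp
      have m4 : 0 ≤ ε₁ * δ' := mul_nonneg hε₁pos.le hδ'pos.le
      linarith only [m1, m2, m3, m4, h2, h3, hRdef]
    have hA1F₁ : A1 ∈ F₁ := Finset.mem_filter.2 ⟨hA1, hφA1⟩
    have hγA1 : F₁.sup' hF₁ne W = W A1 := by
      apply le_antisymm
      · apply Finset.sup'_le
        intro x hx
        have hxA : x ∈ A := Finset.mem_of_mem_filter _ hx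
        have hφx : φ x = Mφ := (Finset.mem_filter.1 hx).2
        have := hmax1A x hxA
        rw [hφx, ← hφA1] at this
        have : ε₁ * W x ≤ ε₁ * W A1 := by linarith only [this]
        exact le_of_mul_le_mul_left this hε₁pos
      · exact Finset.le_sup' W hA1F₁
    have hγα : F₁.sup' hF₁ne W = α := by rw [hγA1, hWA12, hWA2α]
    have := hγvF
    rw [hγα] at this
    exact Finset.mem_of_mem_filter _ this
  -- number-theoretic conclusion
  have hv₀S : v₀ ∈ S := Finset.mem_coe.1 (extremePoints_convexHull_subset hv₀)
  have hv₀ne : v₀ ≠ 0 := by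
    intro h
    have := hSW v₀ hv₀S
    rw [h, map_zero] at this
    exact hc.ne this
  obtain ⟨i₀, hi₀⟩ : ∃ i, v₀ i ≠ 0 := by
    by_contra h
    push_neg at h
    exact hv₀ne (funext h)
  obtain ⟨m₀, hm₀⟩ := hSlat v₀ hv₀S i₀
  have hm₀pos : 0 < m₀ := by
    rcases Nat.eq_zero_or_pos m₀ with h | h
    · exact absurd (by rw [hm₀, h]; norm_num) hi₀
    · exact h
  obtain ⟨p₀, hp₀⟩ := hAlat _ (key v₀ hv₀) i₀
  rw [Pi.smul_apply, smul_eq_mul, hm₀] at hp₀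
  have hs0 : (0:ℝ) < α / c := div_pos hαpos hc
  have hs1 : α / c < 1 := (div_lt_one hc).2 hαc
  have hm₀R : (0:ℝ) < m₀ := by exact_mod_cast hm₀pos
  have hp₀pos : 0 < p₀ := by
    rcases Nat.eq_zero_or_pos p₀ with h | h
    · exfalso
      rw [h] at hp₀
      push_cast at hp₀
      nlinarith [mul_pos hs0 hm₀R]
    · exact h
  have hp₀lt : p₀ < m₀ := by
    have h1 : (p₀:ℝ) < m₀ := by
      rw [← hp₀]
      nlinarith [hs1, hm₀R]
    exact_mod_cast h1
  set g := Nat.gcd p₀ m₀ with hgdef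
  have hgpos : 0 < g := Nat.gcd_pos_of_pos_left m₀ hp₀pos
  set p := p₀ / g with hpdef
  set q := m₀ / g with hqdef
  have hpg : g * p = p₀ := Nat.mul_div_cancel' (Nat.gcd_dvd_left p₀ m₀)
  have hqg : g * q = m₀ := Nat.mul_div_cancel' (Nat.gcd_dvd_right p₀ m₀)
  have hcop : Nat.Coprime p q := Nat.coprime_div_gcd_div_gcd hgpos
  have hqpos : 0 < q := by
    rcases Nat.eq_zero_or_pos q with h | h
    · rw [h, Nat.mul_zero] at hqg
      omega
    · exact h
  have hgR : (g:ℝ) ≠ 0 := by exact_mod_cast hgpos.ne'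
  have hpq : (p:ℝ) = (α / c) * q := by
    have h1 : (α / c) * ((g:ℝ) * q) = (g:ℝ) * p := by
      rw [show ((g:ℝ) * q) = ((m₀:ℕ):ℝ) by exact_mod_cast congrArg (Nat.cast (R := ℝ)) hqg,
        hp₀]
      exact_mod_cast congrArg (Nat.cast (R := ℝ)) hpg.symm
    have h2 : (g:ℝ) * ((α / c) * q) = (g:ℝ) * p := by rw [← h1]; ring
    exact (mul_left_cancel₀ hgR h2).symm
  have hq1 : q ≠ 1 := by
    intro h
    rw [h] at hpq
    push_cast at hpq
    rw [mul_one] at hpq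
    have hplt : (p:ℝ) < 1 := by rw [hpq]; exact hs1
    have hp0 : p = 0 := by
      have h1 : p < 1 := by exact_mod_cast hplt
      exact Nat.lt_one_iff.1 h1
    rw [hp0] at hpq
    push_cast at hpq
    exact hs0.ne hpq
  refine ⟨q, hq1, ?_⟩
  intro v hv i
  have hvS : v ∈ S := Finset.mem_coe.1 (extremePoints_convexHull_subset hv)
  obtain ⟨m, hm⟩ := hSlat v hvS i
  obtain ⟨kk, hkk⟩ := hAlat _ (key v hv) i
  rw [Pi.smul_apply, smul_eq_mul, hm] at hkk
  have hqk : (q:ℝ) * kk = (p:ℝ) * m := by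
    rw [← hkk, hpq]
    ring
  have hnat : q * kk = p * m := by exact_mod_cast hqk
  have hdvd : q ∣ p * m := ⟨kk, hnat.symm⟩
  have hdm : q ∣ m := (Nat.Coprime.dvd_of_dvd_mul_left hcop.symm hdvd)
  obtain ⟨n, hn⟩ := hdm
  refine ⟨(n : ℤ), ?_⟩
  rw [hm, hn]
  push_cast
  ring


-- easy direction
lemma easy {l : ℕ} (S : Finset (Fin l → ℝ)) (hS : S.Nonempty)
    (hSlat : ∀ x ∈ S, ∀ i, ∃ n : ℕ, x i = n)
    (w : Fin l → ℝ) (c : ℝ) (hc : c ≠ 0)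
    (hSw : ∀ x ∈ S, ∑ i, w i * x i = c)
    (hgcd : ¬ VertexGcdOne (convexHull ℝ (S : Set (Fin l → ℝ)))) :
    IsSummable (convexHull ℝ (insert (0 : Fin l → ℝ) (S : Set (Fin l → ℝ)))) := by
  classical
  rw [VertexGcdOne] at hgcd
  push_neg at hgcd
  obtain ⟨d, hd, hdne⟩ := hgcd
  set Γ := convexHull ℝ (S : Set (Fin l → ℝ)) with hΓdef
  set EP := Set.extremePoints ℝ Γ with hEPdef
  have hcomp : IsCompact Γ := S.finite_toSet.isCompact_convexHull ℝ
  have hconv : Convex ℝ Γ := convex_convexHull ℝ _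
  have hΓne : Γ.Nonempty := hS.imp (fun s hs => subset_convexHull ℝ _ hs)
  have hEPne : EP.Nonempty := hcomp.extremePoints_nonempty hΓne
  have hEPsub : EP ⊆ (S : Set (Fin l → ℝ)) := extremePoints_convexHull_subset
  obtain ⟨v₁, hv₁⟩ := hEPne
  have hv₁S : v₁ ∈ S := Finset.mem_coe.1 (hEPsub hv₁)
  have hv₁ne : v₁ ≠ 0 := by
    intro h
    have := hSw v₁ hv₁S
    rw [h] at this
    simp at this
    exact hc this.symm
  obtain ⟨i₀, hi₀⟩ : ∃ i, v₁ i ≠ 0 := by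
    by_contra h
    push_neg at h
    exact hv₁ne (funext h)
  have hd0 : d ≠ 0 := by
    rintro rfl
    apply hi₀
    obtain ⟨n, hn⟩ := hd v₁ hv₁ i₀
    rw [hn]; norm_num
  have hd2 : 2 ≤ d := by omega
  have hdR : (0:ℝ) < d := by positivity
  -- EP coordinates are naturals divisible by d
  have hEPco : ∀ v ∈ EP, ∀ i, ∃ n : ℕ, v i = (d : ℝ) * n := by
    intro v hv i
    obtain ⟨n, hn⟩ := hd v hv i
    obtain ⟨m, hm⟩ := hSlat v (Finset.mem_coe.1 (hEPsub hv)) i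
    have hn0 : 0 ≤ n := by
      by_contra h
      push_neg at h
      have h1 : (n:ℝ) < 0 := by exact_mod_cast h
      have h2 : (0:ℝ) ≤ v i := by rw [hm]; positivity
      nlinarith [hn ▸ h2]
    refine ⟨n.toNat, ?_⟩
    rw [hn]
    congr 1
    exact_mod_cast (Int.toNat_of_nonneg hn0).symm
  -- Krein-Milman for polytopes
  have hfin : EP.Finite := S.finite_toSet.subset hEPsub
  have hKM : convexHull ℝ EP = Γ := by
    have h1 := closure_convexHull_extremePoints hcomp hconv
    rw [← hEPdef] at h1
    rw [← (hfin.isClosed_convexHull ℝ).closure_eq]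
    exact h1
  have hins : convexHull ℝ (insert (0 : Fin l → ℝ) (S : Set (Fin l → ℝ))) =
      convexHull ℝ (insert (0 : Fin l → ℝ) EP) := by
    rw [Set.insert_eq, Set.insert_eq, ← convexHull_convexHull_union_right,
      ← hΓdef, ← hKM, convexHull_convexHull_union_right]
  set K := convexHull ℝ (insert (0 : Fin l → ℝ) EP) with hKdef
  have hKconv : Convex ℝ K := convex_convexHull ℝ _
  -- the finsets
  set ι : (Fin l → ℕ) → (Fin l → ℝ) := fun m i => (m i : ℝ) with hιdef
  set gA : (Fin l → ℝ) → (Fin l → ℕ) := fun v i => ⌊v i / d⌋₊ with hgAdef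
  set gB : (Fin l → ℝ) → (Fin l → ℕ) := fun v i => (d-1) * ⌊v i / d⌋₊ with hgBdef
  have hgAval : ∀ v ∈ EP, ι (gA v) = (d:ℝ)⁻¹ • v := by
    intro v hv
    funext i
    obtain ⟨n, hn⟩ := hEPco v hv i
    have : v i / d = (n:ℝ) := by rw [hn]; field_simp
    simp only [hιdef, hgAdef, Pi.smul_apply, smul_eq_mul, this, Nat.floor_natCast]
    rw [hn]; field_simp
  have hgBval : ∀ v ∈ EP, ι (gB v) = (((d:ℝ) - 1) / d) • v := by
    intro v hv
    funext i
    obtain ⟨n, hn⟩ := hEPco v hv i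
    have : v i / d = (n:ℝ) := by rw [hn]; field_simp
    simp only [hιdef, hgBdef, Pi.smul_apply, smul_eq_mul, this, Nat.floor_natCast]
    rw [hn]
    push_cast [Nat.cast_sub (by omega : 1 ≤ d)]
    field_simp
  set A₀ : Finset (Fin l → ℕ) := insert 0 (hfin.toFinset.image gA) with hA₀def
  set B₀ : Finset (Fin l → ℕ) := insert 0 (hfin.toFinset.image gB) with hB₀def
  -- coordinates of v₁
  obtain ⟨n₁, hn₁⟩ := hEPco v₁ hv₁ i₀
  have hn₁0 : n₁ ≠ 0 := by
    intro h
    apply hi₀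
    rw [hn₁, h]; norm_num
  have hv₁mem : v₁ ∈ hfin.toFinset := hfin.mem_toFinset.2 hv₁
  have hgAv₁ : gA v₁ ≠ 0 := by
    intro h
    have := congrFun h i₀
    simp only [hgAdef, Pi.zero_apply] at this
    have hfl : v₁ i₀ / d = (n₁:ℝ) := by rw [hn₁]; field_simp
    rw [hfl, Nat.floor_natCast] at this
    exact hn₁0 this
  have hgBv₁ : gB v₁ ≠ 0 := by
    intro h
    have := congrFun h i₀
    simp only [hgBdef, Pi.zero_apply] at this
    have hfl : v₁ i₀ / d = (n₁:ℝ) := by rw [hn₁]; field_simp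
    rw [hfl, Nat.floor_natCast] at this
    rcases Nat.mul_eq_zero.1 this with h | h
    · omega
    · exact hn₁0 h
  have hcardA : 2 ≤ A₀.card := by
    have h : (1:ℕ) < A₀.card := Finset.one_lt_card.2
      ⟨0, Finset.mem_insert_self _ _, gA v₁,
        Finset.mem_insert_of_mem (Finset.mem_image_of_mem gA hv₁mem),
        fun h => hgAv₁ h.symm⟩
    omega
  have hcardB : 2 ≤ B₀.card := by
    have h : (1:ℕ) < B₀.card := Finset.one_lt_card.2
      ⟨0, Finset.mem_insert_self _ _, gB v₁,
        Finset.mem_insert_of_mem (Finset.mem_image_of_mem gB hv₁mem),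
        fun h => hgBv₁ h.symm⟩
    omega
  have hι0 : ι 0 = 0 := by funext i; simp [hιdef]
  have hιA : ι '' (A₀ : Set (Fin l → ℕ)) = (d:ℝ)⁻¹ • (insert (0:Fin l → ℝ) EP) := by
    rw [hA₀def]
    push_cast [Finset.coe_insert, Finset.coe_image, hfin.coe_toFinset]
    rw [Set.image_insert_eq, hι0, Set.image_image]
    have him : (fun v => ι (gA v)) '' EP = (fun v => (d:ℝ)⁻¹ • v) '' EP :=
      Set.image_congr hgAval
    rw [him, Set.image_smul, Set.smul_set_insert, smul_zero]
  have hιB : ι '' (B₀ : Set (Fin l → ℕ)) = (((d:ℝ) - 1)/d) • (insert (0:Fin l → ℝ) EP) := by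
    rw [hB₀def]
    push_cast [Finset.coe_insert, Finset.coe_image, hfin.coe_toFinset]
    rw [Set.image_insert_eq, hι0, Set.image_image]
    have him : (fun v => ι (gB v)) '' EP = (fun v => (((d:ℝ) - 1)/d) • v) '' EP :=
      Set.image_congr hgBval
    rw [him, Set.image_smul, Set.smul_set_insert, smul_zero]
  refine ⟨A₀, B₀, hcardA, hcardB, ?_⟩
  show _ = convexHull ℝ (ι '' (A₀ : Set (Fin l → ℕ))) + convexHull ℝ (ι '' (B₀ : Set (Fin l → ℕ)))
  rw [hins, hιA, hιB, convexHull_smul, convexHull_smul, ← hKdef]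
  have hd1R : (0:ℝ) ≤ ((d:ℝ) - 1)/d := by
    apply div_nonneg _ hdR.le
    have : (1:ℝ) ≤ d := by exact_mod_cast (by omega : 1 ≤ d)
    linarith
  rw [← Convex.add_smul hKconv (by positivity : (0:ℝ) ≤ (d:ℝ)⁻¹) hd1R]
  have hone : (d:ℝ)⁻¹ + ((d:ℝ) - 1)/d = 1 := by field_simp; ring
  rw [hone, one_smul]


end GaoHelpers

theorem stmt9 {l : ℕ} {k : Type*} [Field k] (P : MvPolynomial (Fin l) k) (hP : P ≠ 0)
    (w : Fin l → ℝ) (c : ℝ) (hw : w ≠ 0) (hc : c ≠ 0)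
    (hH : ∀ v ∈ newtonPolytope P, ∑ i, w i * v i = c) :
    ¬ IsSummable (newtonPolytope0 P) ↔ VertexGcdOne (newtonPolytope P) := by
  classical
  set Sf : Finset (Fin l → ℝ) :=
    P.support.image (fun m : Fin l →₀ ℕ => fun i : Fin l => (m i : ℝ)) with hSfdef
  have hcoe : (Sf : Set (Fin l → ℝ)) =
      (fun m : Fin l →₀ ℕ => fun i : Fin l => (m i : ℝ)) '' (P.support : Set (Fin l →₀ ℕ)) := by
    rw [hSfdef, Finset.coe_image]
  have hNP : newtonPolytope P = convexHull ℝ (Sf : Set (Fin l → ℝ)) := by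
    rw [newtonPolytope, hcoe]
  have hNP0 : newtonPolytope0 P = convexHull ℝ (insert (0 : Fin l → ℝ) (Sf : Set (Fin l → ℝ))) := by
    rw [newtonPolytope0, hcoe]
  have hSne : Sf.Nonempty := by
    rw [hSfdef, Finset.image_nonempty]
    exact MvPolynomial.support_nonempty.2 hP
  have hSlat : ∀ x ∈ Sf, ∀ i, ∃ n : ℕ, x i = n := by
    intro x hx i
    rw [hSfdef] at hx
    obtain ⟨m, hm, rfl⟩ := Finset.mem_image.1 hx
    exact ⟨m i, rfl⟩
  have hSw : ∀ x ∈ Sf, ∑ i, w i * x i = c := by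
    intro x hx
    apply hH
    rw [hNP]
    exact subset_convexHull ℝ _ (Finset.mem_coe.2 hx)
  constructor
  · intro hns
    by_contra hgcd
    rw [hNP] at hgcd
    exact hns (hNP0 ▸ easy Sf hSne hSlat w c hc hSw hgcd)
  · rintro hgcd ⟨A₀, B₀, hA2, hB2, heq⟩
    -- build the linear functional with positive value
    have hmono : ∀ (w' : Fin l → ℝ) (c' : ℝ), 0 < c' → (∀ x ∈ Sf, ∑ i, w' i * x i = c') → False := by
      intro w' c' hc' hSw'
      set W : (Fin l → ℝ) →ₗ[ℝ] ℝ :=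
        { toFun := fun x => ∑ i, w' i * x i
          map_add' := by
            intro x y
            simp only [Pi.add_apply, mul_add]
            rw [Finset.sum_add_distrib]
          map_smul' := by
            intro r x
            simp only [Pi.smul_apply, smul_eq_mul, RingHom.id_apply]
            rw [Finset.mul_sum]
            congr 1
            funext i
            ring } with hWdef
      have hWapp : ∀ x, W x = ∑ i, w' i * x i := fun x => rfl
      set ι : (Fin l → ℕ) → (Fin l → ℝ) := fun m i => (m i : ℝ) with hιdef
      have hιinj : Function.Injective ι := by
        intro a b hab
        funext i
        have h2 : ((a i : ℝ)) = b i := congrFun hab i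
        exact_mod_cast h2
      set A : Finset (Fin l → ℝ) := A₀.image ι with hAdef
      set B : Finset (Fin l → ℝ) := B₀.image ι with hBdef
      have hA2' : 2 ≤ A.card := by rw [hAdef, Finset.card_image_of_injective _ hιinj]; exact hA2
      have hB2' : 2 ≤ B.card := by rw [hBdef, Finset.card_image_of_injective _ hιinj]; exact hB2
      have hAlat : ∀ x ∈ A, ∀ i, ∃ n : ℕ, x i = n := by
        intro x hx i
        rw [hAdef] at hx
        obtain ⟨m, hm, rfl⟩ := Finset.mem_image.1 hx
        exact ⟨m i, rfl⟩
      have hBlat : ∀ x ∈ B, ∀ i, ∃ n : ℕ, x i = n := by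
        intro x hx i
        rw [hBdef] at hx
        obtain ⟨m, hm, rfl⟩ := Finset.mem_image.1 hx
        exact ⟨m i, rfl⟩
      have hsum : convexHull ℝ ((insert (0 : Fin l → ℝ) Sf : Finset (Fin l → ℝ)) : Set (Fin l → ℝ)) =
          convexHull ℝ (A : Set (Fin l → ℝ)) + convexHull ℝ (B : Set (Fin l → ℝ)) := by
        rw [Finset.coe_insert, ← hNP0]
        rw [hAdef, hBdef, Finset.coe_image, Finset.coe_image]
        exact heq
      obtain ⟨d, hd1, hdall⟩ := hard Sf A B hSne W c' hc' (fun x hx => hSw' x hx) hSlat hAlat hBlat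
        hA2' hB2' hsum
      apply hd1
      apply hgcd d
      rw [hNP]
      exact hdall
    rcases lt_or_gt_of_ne hc with hneg | hpos
    · exact hmono (-w) (-c) (by linarith) (by
        intro x hx
        have := hSw x hx
        simp only [Pi.neg_apply, neg_mul]
        rw [Finset.sum_neg_distrib, this])
    · exact hmono w c hpos hSw
end

section
/- Let k be an algebraically closed field and p, q, r pairwise setwise coprime positive integers (gcd(p,q,r) = 1 suffices when p,q,r are pairwise arbitrary but globally coprime). Let Q(x,y,z) = Σ a_{ijk} x^i y^j z^k where the sum is over triples with i/p + j/q + k/r < 1 and a_{000} ≠ 0. Then for every t* ∈ k with t* ≠ 0, the polynomial x^p + y^q + z^r + t* Q(x,y,z) is irreducible in k[x,y,z]. -/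
open MvPolynomial

lemma whc_mul {σ R : Type*} [CommRing R] (w : σ → ℕ) (f g : MvPolynomial σ R)
    (df dg : ℕ) (hf : ∀ m ∈ f.support, Finsupp.weight w m ≤ df)
    (hg : ∀ m ∈ g.support, Finsupp.weight w m ≤ dg) :
    weightedHomogeneousComponent w (df + dg) (f * g) =
      weightedHomogeneousComponent w df f * weightedHomogeneousComponent w dg g := by
  classical
  ext m
  rw [coeff_weightedHomogeneousComponent, MvPolynomial.coeff_mul, MvPolynomial.coeff_mul]
  split_ifs with hm
  · apply Finset.sum_congr rfl
    intro x hx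
    rw [Finset.HasAntidiagonal.mem_antidiagonal] at hx
    rw [coeff_weightedHomogeneousComponent, coeff_weightedHomogeneousComponent]
    by_cases h1 : coeff x.1 f = 0
    · simp [h1]
    by_cases h2 : coeff x.2 g = 0
    · simp [h2]
    have hw1 : Finsupp.weight w x.1 ≤ df := hf _ (MvPolynomial.mem_support_iff.mpr h1)
    have hw2 : Finsupp.weight w x.2 ≤ dg := hg _ (MvPolynomial.mem_support_iff.mpr h2)
    have hsum : Finsupp.weight w x.1 + Finsupp.weight w x.2 = df + dg := by
      rw [← map_add, hx, hm]
    rw [if_pos (by omega), if_pos (by omega)]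
  · symm
    apply Finset.sum_eq_zero
    intro x hx
    rw [Finset.HasAntidiagonal.mem_antidiagonal] at hx
    rw [coeff_weightedHomogeneousComponent, coeff_weightedHomogeneousComponent]
    split_ifs with h1 h2
    · exact absurd (by rw [← hx, map_add, h1, h2]) hm
    all_goals simp

lemma wtd_le_iff {σ R : Type*} [CommRing R] (w : σ → ℕ) (f : MvPolynomial σ R) (n : ℕ)
    (h : ∀ m ∈ f.support, Finsupp.weight w m ≤ n) : weightedTotalDegree w f ≤ n :=
  Finset.sup_le h

lemma whc_top_ne_zero {σ R : Type*} [CommRing R] (w : σ → ℕ) (f : MvPolynomial σ R)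
    (hf : f ≠ 0) :
    weightedHomogeneousComponent w (weightedTotalDegree w f) f ≠ 0 := by
  classical
  obtain ⟨m, hm, hm'⟩ := Finset.exists_mem_eq_sup f.support
    (MvPolynomial.support_nonempty.mpr hf) (fun s => Finsupp.weight w s)
  intro h
  have h2 := coeff_weightedHomogeneousComponent (w := w) (weightedTotalDegree w f) f m
  rw [h, if_pos (show Finsupp.weight w m = weightedTotalDegree w f from hm'.symm)] at h2
  exact MvPolynomial.mem_support_iff.mp hm h2.symm

lemma wtd_one {σ R : Type*} [CommRing R] [Nontrivial R] (w : σ → ℕ) :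
    weightedTotalDegree w (1 : MvPolynomial σ R) = 0 := by
  classical
  apply Nat.le_zero.mp
  apply wtd_le_iff
  intro m hm
  have : coeff m (1 : MvPolynomial σ R) ≠ 0 := MvPolynomial.mem_support_iff.mp hm
  rw [MvPolynomial.coeff_one] at this
  split_ifs at this with h
  · rw [← h, map_zero]
  · simp at this

lemma wtd_mul {σ : Type*} {k : Type*} [Field k] (w : σ → ℕ) (a b : MvPolynomial σ k)
    (ha : a ≠ 0) (hb : b ≠ 0) :
    weightedTotalDegree w (a * b) = weightedTotalDegree w a + weightedTotalDegree w b ∧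
    weightedHomogeneousComponent w (weightedTotalDegree w a + weightedTotalDegree w b) (a * b) =
      weightedHomogeneousComponent w (weightedTotalDegree w a) a *
      weightedHomogeneousComponent w (weightedTotalDegree w b) b := by
  classical
  have hmul := whc_mul w a b _ _ (fun m hm => le_weightedTotalDegree w hm)
    (fun m hm => le_weightedTotalDegree w hm)
  refine ⟨le_antisymm ?_ ?_, hmul⟩
  · apply wtd_le_iff
    intro m hm
    obtain ⟨ma, hma, mb, hmb, rfl⟩ := Finset.mem_add.mp (MvPolynomial.support_mul _ _ hm)
    rw [map_add]
    exact add_le_add (le_weightedTotalDegree w hma) (le_weightedTotalDegree w hmb)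
  · have hne : weightedHomogeneousComponent w
        (weightedTotalDegree w a + weightedTotalDegree w b) (a * b) ≠ 0 := by
      rw [hmul]
      exact mul_ne_zero (whc_top_ne_zero w a ha) (whc_top_ne_zero w b hb)
    by_contra hlt
    exact hne (weightedHomogeneousComponent_eq_zero _ _ (by omega))

lemma whc_zero_eq_self {σ R : Type*} [CommRing R] (w : σ → ℕ) (g : MvPolynomial σ R)
    (h : ∀ m ∈ g.support, Finsupp.weight w m = 0) :
    weightedHomogeneousComponent w 0 g = g := by
  classical
  ext m
  rw [coeff_weightedHomogeneousComponent]
  split_ifs with hw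
  · rfl
  · by_contra hc
    exact hw (h m (MvPolynomial.mem_support_iff.mpr (fun h0 => hc h0.symm)))

lemma unit_of_whc_unit {σ : Type*} {k : Type*} [Field k] (w : σ → ℕ)
    (g : MvPolynomial σ k) (hg : g ≠ 0)
    (hu : IsUnit (weightedHomogeneousComponent w (weightedTotalDegree w g) g)) : IsUnit g := by
  classical
  set u := weightedHomogeneousComponent w (weightedTotalDegree w g) g with hudef
  obtain ⟨v, hv⟩ := hu.exists_right_inv
  have hu0 : u ≠ 0 := whc_top_ne_zero w g hg
  have hv0 : v ≠ 0 := by rintro rfl; rw [mul_zero] at hv; exact one_ne_zero hv.symm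
  have hdeg := (wtd_mul w u v hu0 hv0).1
  rw [hv, wtd_one] at hdeg
  -- weightedTotalDegree w u = 0
  have hwu : weightedTotalDegree w u = 0 := by omega
  -- degree of g is 0
  have hdg : weightedTotalDegree w g = 0 := by
    obtain ⟨m, hm, hm'⟩ := Finset.exists_mem_eq_sup g.support
      (MvPolynomial.support_nonempty.mpr hg) (fun s => Finsupp.weight w s)
    have hcm : coeff m u = coeff m g := by
      rw [hudef, coeff_weightedHomogeneousComponent,
        if_pos (show Finsupp.weight w m = weightedTotalDegree w g from hm'.symm)]
    have hmu : m ∈ u.support :=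
      MvPolynomial.mem_support_iff.mpr (hcm ▸ MvPolynomial.mem_support_iff.mp hm)
    have h3 := le_weightedTotalDegree w hmu
    rw [hwu] at h3
    have h4 : weightedTotalDegree w g = Finsupp.weight w m := hm'
    omega
  -- all support of g is at weight 0
  have hsupp0 : ∀ m ∈ g.support, Finsupp.weight w m = 0 := by
    intro m hm
    have := le_weightedTotalDegree w hm
    rw [hdg] at this
    omega
  have : u = g := by
    rw [hudef, hdg]
    exact whc_zero_eq_self w g hsupp0
  rwa [this] at hu

lemma irreducible_of_whc {σ : Type*} {k : Type*} [Field k] (w : σ → ℕ)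
    (f : MvPolynomial σ k) (N : ℕ)
    (hsupp : ∀ m ∈ f.support, Finsupp.weight w m ≤ N)
    (hirr : Irreducible (weightedHomogeneousComponent w N f)) :
    Irreducible f := by
  classical
  have hf0 : f ≠ 0 := by
    rintro rfl
    rw [map_zero] at hirr
    exact not_irreducible_zero hirr
  have hN : weightedTotalDegree w f = N := by
    refine le_antisymm (wtd_le_iff w f N hsupp) ?_
    by_contra hlt
    exact hirr.ne_zero (weightedHomogeneousComponent_eq_zero _ _ (by omega))
  constructor
  · intro hu
    obtain ⟨v, hv⟩ := hu.exists_right_inv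
    have hv0 : v ≠ 0 := by rintro rfl; rw [mul_zero] at hv; exact one_ne_zero hv.symm
    have hdeg := (wtd_mul w f v hf0 hv0).1
    rw [hv, wtd_one] at hdeg
    have hNz : N = 0 := by omega
    have hfix : weightedHomogeneousComponent w N f = f := by
      subst hNz
      exact whc_zero_eq_self w f (fun m hm => by
        have := le_weightedTotalDegree w hm; omega)
    exact hirr.not_isUnit (by rw [hfix]; exact hu)
  · intro a b hab
    have ha0 : a ≠ 0 := by rintro rfl; rw [zero_mul] at hab; exact hf0 hab
    have hb0 : b ≠ 0 := by rintro rfl; rw [mul_zero] at hab; exact hf0 hab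
    have h2 := wtd_mul w a b ha0 hb0
    have hsum : weightedTotalDegree w a + weightedTotalDegree w b = N := by
      rw [← h2.1, ← hab, hN]
    have hfact : weightedHomogeneousComponent w N f =
        weightedHomogeneousComponent w (weightedTotalDegree w a) a *
        weightedHomogeneousComponent w (weightedTotalDegree w b) b := by
      rw [hab, ← hsum, h2.2]
    rcases hirr.isUnit_or_isUnit hfact with h | h
    · exact Or.inl (unit_of_whc_unit w a ha0 h)
    · exact Or.inr (unit_of_whc_unit w b hb0 h)

set_option synthInstance.maxHeartbeats 1000000 in
set_option maxHeartbeats 1000000 in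
lemma brieskorn_aux {k : Type*} [Field k] (p q r : ℕ) (hodd : Odd p)
    (hq : 0 < q) (hr : 0 < r) (hgcd : Nat.gcd p (Nat.gcd q r) = 1) :
    Irreducible (X 0 ^ p + X 1 ^ q + X 2 ^ r : MvPolynomial (Fin 3) k) := by
  have hp : 0 < p := hodd.pos
  set A := MvPolynomial (Fin 2) k with hA
  set a : A := -(X 0 ^ q + X 1 ^ r) with ha
  suffices h : Irreducible (Polynomial.X ^ p - Polynomial.C a) by
    have himg : (MvPolynomial.finSuccEquiv k 2) (X 0 ^ p + X 1 ^ q + X 2 ^ r) =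
        Polynomial.X ^ p - Polynomial.C a := by
      have e1 : (1 : Fin 3) = Fin.succ 0 := rfl
      have e2 : (2 : Fin 3) = Fin.succ 1 := rfl
      rw [e1, e2]
      simp only [map_add, map_pow, MvPolynomial.finSuccEquiv_X_zero,
        MvPolynomial.finSuccEquiv_X_succ, ha, map_neg]
      ring
    exact (MulEquiv.irreducible_iff
      (MvPolynomial.finSuccEquiv k 2).toMulEquiv).mp (himg ▸ h)
  -- now work over A
  letI K := FractionRing A
  haveI : UniqueFactorizationMonoid A := by infer_instance
  haveI : IsIntegrallyClosed A := by infer_instance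
  have hmonic : (Polynomial.X ^ p - Polynomial.C a).Monic :=
    Polynomial.monic_X_pow_sub_C a hp.ne'
  rw [hmonic.irreducible_iff_irreducible_map_fraction_map (K := K)]
  rw [Polynomial.map_sub, Polynomial.map_pow, Polynomial.map_X, Polynomial.map_C]
  apply X_pow_sub_C_irreducible_of_odd hodd
  intro d hd hdp b hb
  have hd2 : d ≠ 2 := by
    rintro rfl
    rw [Nat.odd_iff] at hodd
    obtain ⟨c, rfl⟩ := hdp
    omega
  have hdodd : Odd d := hd.odd_of_ne_two hd2
  have hbint : IsIntegral A b :=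
    ⟨Polynomial.X ^ d - Polynomial.C a, Polynomial.monic_X_pow_sub_C a hd.ne_zero,
      by simp [hb, sub_eq_zero]⟩
  obtain ⟨f, hf⟩ := IsIntegrallyClosed.isIntegral_iff.mp hbint
  have hfd : f ^ d = a := by
    apply IsFractionRing.injective A K
    rw [map_pow, hf, hb]
  have hgd : (-f) ^ d = X 0 ^ q + X 1 ^ r := by
    rw [hdodd.neg_pow, hfd, ha, neg_neg]
  -- d ∣ q
  have hdq : d ∣ q := by
    have h1 : (MvPolynomial.aeval ![Polynomial.X, 0] (-f) : Polynomial k) ^ d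
        = Polynomial.X ^ q := by
      rw [← map_pow, hgd]
      simp [zero_pow hr.ne']
    have h2 := congrArg Polynomial.natDegree h1
    rw [Polynomial.natDegree_pow, Polynomial.natDegree_X_pow] at h2
    exact ⟨_, h2.symm⟩
  -- d ∣ r
  have hdr : d ∣ r := by
    have h1 : (MvPolynomial.aeval ![0, Polynomial.X] (-f) : Polynomial k) ^ d
        = Polynomial.X ^ r := by
      rw [← map_pow, hgd]
      simp [zero_pow hq.ne']
    have h2 := congrArg Polynomial.natDegree h1
    rw [Polynomial.natDegree_pow, Polynomial.natDegree_X_pow] at h2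
    exact ⟨_, h2.symm⟩
  have hone : d ∣ 1 := hgcd ▸ Nat.dvd_gcd hdp (Nat.dvd_gcd hdq hdr)
  have hd1 : d = 1 := Nat.dvd_one.mp hone
  exact hd.one_lt.ne' (by omega)

lemma gcd3_rot (a b c : ℕ) : Nat.gcd a (Nat.gcd b c) = Nat.gcd b (Nat.gcd a c) := by
  rw [← Nat.gcd_assoc, Nat.gcd_comm a b, Nat.gcd_assoc]

lemma brieskorn {k : Type*} [Field k] (p q r : ℕ) (hp : 0 < p) (hq : 0 < q) (hr : 0 < r)
    (hgcd : Nat.gcd p (Nat.gcd q r) = 1) :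
    Irreducible (X 0 ^ p + X 1 ^ q + X 2 ^ r : MvPolynomial (Fin 3) k) := by
  by_cases hpo : Odd p
  · exact brieskorn_aux p q r hpo hq hr hgcd
  by_cases hqo : Odd q
  · have h := brieskorn_aux (k := k) q p r hqo hp hr (by rw [gcd3_rot q p r]; exact hgcd)
    have h2 := (MulEquiv.irreducible_iff
      (MvPolynomial.renameEquiv k (Equiv.swap (0 : Fin 3) 1)).toMulEquiv).mpr h
    have himg : (MvPolynomial.renameEquiv k (Equiv.swap (0 : Fin 3) 1))
        (X 0 ^ q + X 1 ^ p + X 2 ^ r) = X 0 ^ p + X 1 ^ q + X 2 ^ r := by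
      have e2 : Equiv.swap (0 : Fin 3) 1 2 = 2 := by decide
      simp only [MvPolynomial.renameEquiv_apply, map_add, map_pow, MvPolynomial.rename_X,
        Equiv.swap_apply_left, Equiv.swap_apply_right, e2]
      ring
    have himg' : (MvPolynomial.renameEquiv k (Equiv.swap (0 : Fin 3) 1)).toMulEquiv
        (X 0 ^ q + X 1 ^ p + X 2 ^ r) = X 0 ^ p + X 1 ^ q + X 2 ^ r := himg
    rwa [himg'] at h2
  by_cases hro : Odd r
  · have h := brieskorn_aux (k := k) r q p hro hq hp (by
      rw [gcd3_rot r q p, Nat.gcd_comm r p, gcd3_rot q p r]; exact hgcd)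
    have h2 := (MulEquiv.irreducible_iff
      (MvPolynomial.renameEquiv k (Equiv.swap (0 : Fin 3) 2)).toMulEquiv).mpr h
    have himg : (MvPolynomial.renameEquiv k (Equiv.swap (0 : Fin 3) 2))
        (X 0 ^ r + X 1 ^ q + X 2 ^ p) = X 0 ^ p + X 1 ^ q + X 2 ^ r := by
      have e2 : Equiv.swap (0 : Fin 3) 2 1 = 1 := by decide
      simp only [MvPolynomial.renameEquiv_apply, map_add, map_pow, MvPolynomial.rename_X,
        Equiv.swap_apply_left, Equiv.swap_apply_right, e2]
      ring
    have himg' : (MvPolynomial.renameEquiv k (Equiv.swap (0 : Fin 3) 2)).toMulEquiv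
        (X 0 ^ r + X 1 ^ q + X 2 ^ p) = X 0 ^ p + X 1 ^ q + X 2 ^ r := himg
    rwa [himg'] at h2
  · exfalso
    rw [Nat.not_odd_iff_even] at hpo hqo hro
    have h2 : 2 ∣ Nat.gcd p (Nat.gcd q r) :=
      Nat.dvd_gcd hpo.two_dvd (Nat.dvd_gcd hqo.two_dvd hro.two_dvd)
    rw [hgcd] at h2
    omega

theorem stmt11 {k : Type*} [Field k] [IsAlgClosed k] (p q r : ℕ)
    (hp : 0 < p) (hq : 0 < q) (hr : 0 < r) (hgcd : Nat.gcd p (Nat.gcd q r) = 1)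
    (Q : MvPolynomial (Fin 3) k)
    (hQ : ∀ m ∈ Q.support, (m 0 : ℚ) / p + (m 1 : ℚ) / q + (m 2 : ℚ) / r < 1)
    (h0 : MvPolynomial.coeff 0 Q ≠ 0) (t : k) (ht : t ≠ 0) :
    Irreducible (X 0 ^ p + X 1 ^ q + X 2 ^ r + C t * Q : MvPolynomial (Fin 3) k) := by
  classical
  set w : Fin 3 → ℕ := ![q * r, p * r, p * q] with hw
  set N : ℕ := p * q * r with hN
  have hwm : ∀ mm : Fin 3 →₀ ℕ,
      Finsupp.weight w mm = mm 0 * (q * r) + mm 1 * (p * r) + mm 2 * (p * q) := by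
    intro mm
    rw [Finsupp.weight_apply, Finsupp.sum_fintype _ _ (by simp)]
    simp [Fin.sum_univ_three, hw, mul_comm]
  have hQlt : ∀ m ∈ Q.support, Finsupp.weight w m < N := by
    intro m hm
    have hlt := hQ m hm
    have key : ((m 0 * (q * r) + m 1 * (p * r) + m 2 * (p * q) : ℕ) : ℚ)
        < ((p * q * r : ℕ) : ℚ) := by
      push_cast
      have hp' : (0 : ℚ) < p := by exact_mod_cast hp
      have hq' : (0 : ℚ) < q := by exact_mod_cast hq
      have hr' : (0 : ℚ) < r := by exact_mod_cast hr
      calc (m 0 : ℚ) * (q * r) + (m 1 : ℚ) * (p * r) + (m 2 : ℚ) * (p * q)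
          = ((m 0 : ℚ) / p + (m 1 : ℚ) / q + (m 2 : ℚ) / r) * (p * q * r) := by
            field_simp
        _ < 1 * (p * q * r) := mul_lt_mul_of_pos_right hlt (by positivity)
        _ = (p : ℚ) * q * r := one_mul _
    rw [hwm m, hN]
    exact_mod_cast key
  have hCQ : ∀ m ∈ (C t * Q).support, Finsupp.weight w m < N := by
    intro m hm
    apply hQlt
    apply MvPolynomial.support_smul (a := t)
    rwa [MvPolynomial.smul_eq_C_mul]
  have hhom : IsWeightedHomogeneous w (X 0 ^ p + X 1 ^ q + X 2 ^ r : MvPolynomial (Fin 3) k) N := by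
    refine IsWeightedHomogeneous.add (IsWeightedHomogeneous.add ?_ ?_) ?_
    · rw [MvPolynomial.X_pow_eq_monomial]
      exact isWeightedHomogeneous_monomial w _ _ (by rw [hwm]; simp [Finsupp.single_apply]; ring)
    · rw [MvPolynomial.X_pow_eq_monomial]
      exact isWeightedHomogeneous_monomial w _ _ (by rw [hwm]; simp [Finsupp.single_apply]; ring)
    · rw [MvPolynomial.X_pow_eq_monomial]
      exact isWeightedHomogeneous_monomial w _ _ (by rw [hwm]; simp [Finsupp.single_apply]; ring)
  have hcomp : weightedHomogeneousComponent w N (X 0 ^ p + X 1 ^ q + X 2 ^ r + C t * Q)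
      = X 0 ^ p + X 1 ^ q + X 2 ^ r := by
    rw [map_add, IsWeightedHomogeneous.weightedHomogeneousComponent_same hhom,
      weightedHomogeneousComponent_eq_zero' _ _ (fun m hm => (hCQ m hm).ne), add_zero]
  apply irreducible_of_whc w _ N
  · intro m hm
    have hsub := MvPolynomial.support_add hm
    rcases Finset.mem_union.mp hsub with h1 | h1
    · have hsub2 := MvPolynomial.support_add h1
      rcases Finset.mem_union.mp hsub2 with h2 | h2
      · have hsub3 := MvPolynomial.support_add h2
        rcases Finset.mem_union.mp hsub3 with h3 | h3
        · rw [MvPolynomial.support_X_pow, Finset.mem_singleton] at h3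
          subst h3
          rw [hwm]
          simp [Finsupp.single_apply]
          exact le_of_eq (by ring)
        · rw [MvPolynomial.support_X_pow, Finset.mem_singleton] at h3
          subst h3
          rw [hwm]
          simp [Finsupp.single_apply]
          exact le_of_eq (by ring)
      · rw [MvPolynomial.support_X_pow, Finset.mem_singleton] at h2
        subst h2
        rw [hwm]
        simp [Finsupp.single_apply]
        exact le_of_eq (by ring)
    · exact (hCQ m h1).le
  · rw [hcomp]
    exact brieskorn p q r hp hq hr hgcd
end

section
/- Let k be an algebraically closed field and F ∈ k[t1,...,ts][x1,...,xℓ] with ℓ ≥ 2, irreducible over the algebraic closure of k(t1,...,ts). Then the set of (t1*,...,ts*) ∈ k^s such that F(t*,x) has full degree d = deg_x F and is reducible in k[x1,...,xℓ] is contained in a proper Zariski-closed subset of k^s; in particular there exists a nonzero h ∈ k[t1,...,ts] such that h(t*) ≠ 0 and deg F(t*,·) = d imply F(t*,x) is irreducible in k[x]. -/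
open MvPolynomial

noncomputable section BN

namespace BN

variable {l : ℕ}

/-- degree of a monomial -/
def mdeg (a : Fin l →₀ ℕ) : ℕ := a.sum fun _ e => e

lemma mdeg_add (a b : Fin l →₀ ℕ) : mdeg (a + b) = mdeg a + mdeg b :=
  Finsupp.sum_add_index' (fun _ => rfl) (fun _ _ _ => rfl)

lemma coord_le_mdeg (a : Fin l →₀ ℕ) (i : Fin l) : a i ≤ mdeg a := by
  by_cases h : a i = 0
  · omega
  · exact Finset.single_le_sum (f := fun j => a j) (fun _ _ => Nat.zero_le _)
      (Finsupp.mem_support_iff.2 h)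

/-- The monomial order degree-then-lex. -/
def dlex (a : Fin l →₀ ℕ) : ℕ ×ₗ Lex (Fin l →₀ ℕ) := toLex (mdeg a, toLex a)

lemma dlex_injective : Function.Injective (dlex (l := l)) := by
  intro a b h
  have := congrArg (fun x => (ofLex x).2) h
  simpa [dlex] using this

lemma dlex_add (a b : Fin l →₀ ℕ) : dlex (a + b) = dlex a + dlex b := by
  simp only [dlex, mdeg_add]
  rfl

variable {R : Type*} [CommSemiring R]

lemma totalDegree_eq_fst {p : MvPolynomial (Fin l) R} (hp : p ≠ 0) :
    p.totalDegree = (ofLex (AddMonoidAlgebra.supDegree dlex p)).1 := by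
  obtain ⟨a, ha, he⟩ := AddMonoidAlgebra.exists_supDegree_mem_support dlex hp
  rw [he]
  show p.totalDegree = mdeg a
  refine le_antisymm (Finset.sup_le fun b hb => ?_) (Finset.le_sup (f := mdeg) ha)
  have hle : dlex b ≤ dlex a := he ▸ Finset.le_sup hb
  rcases Prod.Lex.le_iff.1 hle with h | h
  · exact le_of_lt h
  · exact le_of_eq h.1

lemma totalDegree_mul_eq [NoZeroDivisors R] {p q : MvPolynomial (Fin l) R}
    (hp : p ≠ 0) (hq : q ≠ 0) :
    (p * q).totalDegree = p.totalDegree + q.totalDegree := by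
  have hmul := AddMonoidAlgebra.supDegree_mul dlex_injective dlex_add
    (mul_ne_zero ((AddMonoidAlgebra.leadingCoeff_ne_zero dlex_injective).2 hp)
      ((AddMonoidAlgebra.leadingCoeff_ne_zero dlex_injective).2 hq)) hp hq
  rw [totalDegree_eq_fst (mul_ne_zero hp hq), totalDegree_eq_fst hp, totalDegree_eq_fst hq, hmul]
  rfl



variable {S K : Type*} [CommSemiring S] [Field K]


lemma totalDegree_map_eq {f : R →+* S} (hf : Function.Injective f)
    (p : MvPolynomial (Fin l) R) : (map f p).totalDegree = p.totalDegree := by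
  rw [totalDegree, totalDegree, support_map_of_injective _ hf]

lemma eq_C_of_totalDegree_eq_zero {p : MvPolynomial (Fin l) R}
    (h : p.totalDegree = 0) : p = C (p.coeff 0) := by
  ext m
  rw [coeff_C]
  split_ifs with hm
  · rw [← hm]
  · by_contra hc
    have hmem : m ∈ p.support := Finsupp.mem_support_iff.2 hc
    have h1 : (m.sum fun _ e => e) = 0 := Nat.le_zero.1 (h ▸ Finset.le_sup (f := fun m => m.sum fun _ e => e) hmem)
    apply hm
    ext i
    simp only [Finsupp.coe_zero, Pi.zero_apply]
    rw [Finsupp.sum] at h1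
    by_cases h2 : m i = 0
    · omega
    · have h3 : m i ≤ ∑ x ∈ m.support, m x := Finset.single_le_sum (f := fun j => m j)
        (fun _ _ => Nat.zero_le _) (Finsupp.mem_support_iff.2 h2)
      have h4 : ∑ x ∈ m.support, m x = 0 := h1
      omega

lemma isUnit_of_C_ne_zero {c : K} (hc : c ≠ 0) : IsUnit (C c : MvPolynomial (Fin l) K) :=
  IsUnit.of_mul_eq_one (C c⁻¹) (by rw [← C_mul, mul_inv_cancel₀ hc, C_1])

lemma totalDegree_eq_zero_of_isUnit {p : MvPolynomial (Fin l) K} (h : IsUnit p) :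
    p.totalDegree = 0 := by
  obtain ⟨u, rfl⟩ := h
  have h1 : (u : MvPolynomial (Fin l) K) * ↑u⁻¹ = 1 := u.mul_inv
  have hu : (u : MvPolynomial (Fin l) K) ≠ 0 := by
    intro h0; rw [h0, zero_mul] at h1; exact zero_ne_one h1
  have hv : (↑u⁻¹ : MvPolynomial (Fin l) K) ≠ 0 := by
    intro h0; rw [h0, mul_zero] at h1; exact zero_ne_one h1
  have := totalDegree_mul_eq hu hv
  rw [h1, totalDegree_one] at this
  omega

lemma not_isUnit_of_totalDegree_pos {p : MvPolynomial (Fin l) K} (h : 0 < p.totalDegree) :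
    ¬ IsUnit p := fun hu => by simp [totalDegree_eq_zero_of_isUnit hu] at h

lemma isUnit_iff_deg_zero {p : MvPolynomial (Fin l) K} (hp : p ≠ 0) :
    IsUnit p ↔ p.totalDegree = 0 := by
  constructor
  · exact totalDegree_eq_zero_of_isUnit
  · intro h
    rw [eq_C_of_totalDegree_eq_zero h]
    apply isUnit_of_C_ne_zero
    intro h0
    exact hp (by rw [eq_C_of_totalDegree_eq_zero h, h0, C_0])



/-! ### Encoding of monomials with bounded exponents -/

variable {d e : ℕ}

/-- index type for the unknown coefficients -/
abbrev Idx (l d : ℕ) := Bool × (Fin l → Fin (d + 1))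

def enc (m : Fin l → Fin (d + 1)) : Fin l →₀ ℕ :=
  Finsupp.equivFunOnFinite.symm fun i => (m i : ℕ)

@[simp] lemma enc_apply (m : Fin l → Fin (d + 1)) (i : Fin l) : enc m i = m i := rfl

def dec (d : ℕ) (a : Fin l →₀ ℕ) : Fin l → Fin (d + 1) :=
  fun i => ⟨min (a i) d, by omega⟩

lemma enc_dec {a : Fin l →₀ ℕ} (h : ∀ i, a i ≤ d) : enc (dec d a) = a := by
  ext i
  simp [dec, Nat.min_eq_left (h i)]

lemma dec_enc (m : Fin l → Fin (d + 1)) : dec d (enc m) = m := by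
  funext i
  exact Fin.ext (by simp [dec, Nat.min_eq_left (Nat.lt_succ_iff.1 (m i).isLt)])

/-! ### The generic factorization polynomials -/

variable {R T : Type*} [CommRing R] [CommRing T]

/-- coefficient family extracted from an assignment of the unknowns -/
def cf (w : Idx l d → R) (bb : Bool) (c : ℕ) (a : Fin l →₀ ℕ) : R :=
  if mdeg a ≤ c then w (bb, dec d a) else 0

/-- the generic polynomial with coefficients `cf w bb c` -/
def polyOf (w : Idx l d → R) (bb : Bool) (c : ℕ) : MvPolynomial (Fin l) R :=
  ∑ m : Fin l → Fin (d + 1), monomial (enc m) (cf w bb c (enc m))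

lemma coeff_polyOf (w : Idx l d → R) (bb : Bool) {c : ℕ} (hc : c ≤ d) (a : Fin l →₀ ℕ) :
    coeff a (polyOf w bb c) = cf w bb c a := by
  rw [polyOf, coeff_sum]
  by_cases hai : ∀ i, a i ≤ d
  · have h1 : ∀ m : Fin l → Fin (d+1), coeff a (monomial (enc m) (cf w bb c (enc m)))
        = if m = dec d a then cf w bb c (enc m) else 0 := by
      intro m
      rw [coeff_monomial]
      congr 1
      simp only [eq_iff_iff]
      constructor
      · rintro rfl; exact (dec_enc m).symm
      · rintro rfl; exact enc_dec hai
    simp only [h1]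
    rw [Finset.sum_ite_eq' Finset.univ (dec d a) (fun m => cf w bb c (enc m))]
    simp [enc_dec hai]
  · push_neg at hai
    obtain ⟨i, hi⟩ := hai
    have h2 : cf w bb c a = 0 := by
      have := coord_le_mdeg a i
      simp only [cf, if_neg (by omega : ¬ mdeg a ≤ c)]
    rw [h2, Finset.sum_eq_zero]
    intro m _
    rw [coeff_monomial, if_neg]
    intro hm
    have : (enc m) i = a i := by rw [hm]
    simp only [enc_apply] at this
    have := Nat.lt_succ_iff.1 (m i).isLt
    omega

lemma totalDegree_polyOf_le (w : Idx l d → R) (bb : Bool) {c : ℕ} (hc : c ≤ d) :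
    (polyOf w bb c).totalDegree ≤ c := by
  apply Finset.sup_le
  intro a ha
  have h1 : coeff a (polyOf w bb c) ≠ 0 := Finsupp.mem_support_iff.1 ha
  rw [coeff_polyOf w bb hc] at h1
  by_contra h2
  have h2' : ¬ mdeg a ≤ c := h2
  exact h1 (by simp only [cf, if_neg h2'])

/-- the equation asserting that the coefficient of the product at `γ` equals `f γ` -/
def eqn (d e : ℕ) (f : (Fin l →₀ ℕ) → R) (γ : Fin l →₀ ℕ) : MvPolynomial (Idx l d) R :=
  (∑ p ∈ Finset.HasAntidiagonal.antidiagonal γ,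
      (if mdeg p.1 ≤ e then (X (false, dec d p.1) : MvPolynomial (Idx l d) R) else 0) *
      (if mdeg p.2 ≤ d - e then (X (true, dec d p.2) : MvPolynomial (Idx l d) R) else 0))
    - C (f γ)

lemma eval₂Hom_eqn (φ : R →+* T) (w : Idx l d → T) (he : e ≤ d)
    (f : (Fin l →₀ ℕ) → R) (γ : Fin l →₀ ℕ) :
    eval₂Hom φ w (eqn d e f γ)
      = coeff γ (polyOf w false e * polyOf w true (d - e)) - φ (f γ) := by
  rw [eqn, map_sub, map_sum, eval₂Hom_C, coeff_mul]
  congr 1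
  apply Finset.sum_congr rfl
  intro p _
  rw [map_mul, coeff_polyOf w false he, coeff_polyOf w true (Nat.sub_le d e)]
  rw [apply_ite (eval₂Hom φ w), apply_ite (eval₂Hom φ w), eval₂Hom_X', eval₂Hom_X',
    map_zero]
  rfl

lemma prod_polyOf_eq_map (he : e ≤ d) (F : MvPolynomial (Fin l) R) (hdF : F.totalDegree ≤ d)
    (φ : R →+* T) (w : Idx l d → T)
    (hsol : ∀ m : Fin l → Fin (d + 1), eval₂Hom φ w (eqn d e F.coeff (enc m)) = 0) :
    polyOf w false e * polyOf w true (d - e) = map φ F := by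
  ext γ
  rw [coeff_map]
  by_cases hai : ∀ i, γ i ≤ d
  · have h := hsol (dec d γ)
    rw [eval₂Hom_eqn φ w he, enc_dec hai] at h
    exact sub_eq_zero.1 h
  · push_neg at hai
    obtain ⟨i, hi⟩ := hai
    have hγ : d < mdeg γ := lt_of_lt_of_le hi (coord_le_mdeg γ i)
    have hF0 : F.coeff γ = 0 := by
      apply coeff_eq_zero_of_totalDegree_lt
      have : mdeg γ = ∑ j ∈ γ.support, γ j := rfl
      omega
    rw [hF0, map_zero, coeff_mul, Finset.sum_eq_zero]
    intro p hp
    have hpγ : p.1 + p.2 = γ := Finset.HasAntidiagonal.mem_antidiagonal.1 hp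
    rw [coeff_polyOf w false he, coeff_polyOf w true (Nat.sub_le d e)]
    have hdd : mdeg p.1 + mdeg p.2 = mdeg γ := by rw [← hpγ, mdeg_add]
    simp only [cf]
    split_ifs with h1 h2
    · omega
    · exact mul_zero _
    · exact zero_mul _
    · exact zero_mul _

/-- The family of generators: the coefficient-matching equations plus the
normalization of the `α`-coefficient of the first factor. -/
def gens (d e : ℕ) (α : Fin l →₀ ℕ) (F : MvPolynomial (Fin l) R) :
    Option (Fin l → Fin (d + 1)) → MvPolynomial (Idx l d) R
  | none => X (false, dec d α) - 1
  | some m => eqn d e F.coeff (enc m)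

/-! ### Descending a certificate along a linear projection -/

section RMap

variable {σ' : Type*} {K Kb : Type*} [Field K] [Field Kb] [Algebra K Kb]

/-- apply a linear functional to all coefficients -/
def rMap (π : Kb →ₗ[K] K) (p : MvPolynomial σ' Kb) : MvPolynomial σ' K :=
  ∑ m ∈ p.support, monomial m (π (coeff m p))

lemma coeff_rMap (π : Kb →ₗ[K] K) (p : MvPolynomial σ' Kb) (m : σ' →₀ ℕ) :
    coeff m (rMap π p) = π (coeff m p) := by
  classical
  rw [rMap, coeff_sum]
  simp only [coeff_monomial]
  rw [Finset.sum_ite_eq' p.support m (fun a => π (coeff a p))]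
  split_ifs with h
  · rfl
  · rw [notMem_support_iff.1 h, map_zero]

/-- `rMap` as an additive monoid hom -/
def rMapHom (π : Kb →ₗ[K] K) : MvPolynomial σ' Kb →+ MvPolynomial σ' K where
  toFun := rMap π
  map_zero' := by ext m; simp [coeff_rMap]
  map_add' p q := by ext m; simp [coeff_rMap, coeff_add]

lemma rMap_one (π : Kb →ₗ[K] K) (hπ1 : π 1 = 1) : rMap π (1 : MvPolynomial σ' Kb) = 1 := by
  classical
  ext m
  rw [coeff_rMap, coeff_one, coeff_one]
  simp [apply_ite π, hπ1]

lemma rMap_mul_map (π : Kb →ₗ[K] K)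
    (hπmul : ∀ (c : K) (x : Kb), π (algebraMap K Kb c * x) = c * π x)
    (p : MvPolynomial σ' Kb) (r : MvPolynomial σ' K) :
    rMap π (p * map (algebraMap K Kb) r) = rMap π p * r := by
  classical
  ext m
  rw [coeff_rMap, coeff_mul, coeff_mul, map_sum]
  apply Finset.sum_congr rfl
  intro q _
  rw [coeff_map, coeff_rMap, mul_comm (coeff q.1 p), hπmul, mul_comm]

end RMap

/-- lift a polynomial along a ring hom when all coefficients lift -/
lemma exists_map_eq {σ' R S : Type*} [CommSemiring R] [CommSemiring S]
    (φ : R →+* S) (p : MvPolynomial σ' S) (h : ∀ m, ∃ r, φ r = coeff m p) :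
    ∃ P : MvPolynomial σ' R, map φ P = p := by
  classical
  choose r hr using h
  refine ⟨∑ m ∈ p.support, monomial m (r m), ?_⟩
  ext m
  rw [coeff_map, coeff_sum]
  simp only [coeff_monomial]
  rw [Finset.sum_ite_eq' p.support m r]
  split_ifs with hm
  · exact hr m
  · rw [map_zero, notMem_support_iff.1 hm]

/-! ### The key lemma: one degree split -/

section Key

variable {k : Type*} [Field k] {s l : ℕ}
variable {K Kb : Type*} [Field K] [Field Kb]
variable [Algebra (MvPolynomial (Fin s) k) K] [IsFractionRing (MvPolynomial (Fin s) k) K]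
variable [Algebra K Kb] [IsAlgClosed Kb]

theorem keyPair (F : MvPolynomial (Fin l) (MvPolynomial (Fin s) k))
    (d e : ℕ) (hd : F.totalDegree = d) (he1 : 1 ≤ e) (he2 : e < d)
    (α : Fin l →₀ ℕ) (hα : mdeg α = e)
    (hF : Irreducible (MvPolynomial.map
      ((algebraMap K Kb).comp (algebraMap (MvPolynomial (Fin s) k) K)) F)) :
    ∃ b : MvPolynomial (Fin s) k, b ≠ 0 ∧
      ∀ (t : Fin s → k) (G H : MvPolynomial (Fin l) k),
        MvPolynomial.map (MvPolynomial.eval t) F = G * H →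
        G.totalDegree ≤ e → H.totalDegree ≤ d - e → G.coeff α = 1 →
        MvPolynomial.eval t b = 0 := by
  classical
  set A := MvPolynomial (Fin s) k with hA
  set φ₀ : A →+* K := algebraMap A K with hφ₀
  set ιK : K →+* Kb := algebraMap K Kb with hιK
  set ψ : A →+* Kb := ιK.comp φ₀ with hψ
  have hψinj : Function.Injective ψ :=
    ιK.injective.comp (IsFractionRing.injective A K)
  have hdψ : (MvPolynomial.map ψ F).totalDegree = d := by
    rw [totalDegree_map_eq hψinj F, hd]
  have hed : e ≤ d := le_of_lt he2
  -- the ideal generated by the specialized equations over the algebraic closure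
  set J : Ideal (MvPolynomial (Idx l d) Kb) :=
    Ideal.span (Set.range fun i => MvPolynomial.map ψ (gens d e α F i)) with hJ
  -- Step 1: the system has no solution over Kb
  have hzero : MvPolynomial.zeroLocus Kb J = ∅ := by
    rw [Set.eq_empty_iff_forall_notMem]
    intro x hx
    have hx' : ∀ i, eval₂Hom ψ x (gens d e α F i) = 0 := by
      intro i
      have h1 := hx _ (Ideal.subset_span (Set.mem_range_self i))
      change eval x _ = 0 at h1; rwa [eval_map] at h1
    have hfac : polyOf x false e * polyOf x true (d - e) = MvPolynomial.map ψ F :=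
      prod_polyOf_eq_map hed F (le_of_eq hd) ψ x (fun m => hx' (some m))
    have hα1 : coeff α (polyOf x false e) = 1 := by
      have h0 := hx' none
      simp only [gens, map_sub, eval₂Hom_X', map_one] at h0
      rw [coeff_polyOf x false hed, cf, if_pos (le_of_eq hα)]
      exact sub_eq_zero.1 h0
    have hαne : ¬ ((0 : Fin l →₀ ℕ) = α) := by
      intro h0
      rw [← h0] at hα
      simp only [mdeg, Finsupp.sum_zero_index] at hα
      omega
    have hGnu : ¬ IsUnit (polyOf x false e) := by
      intro hu
      have h2 := eq_C_of_totalDegree_eq_zero (totalDegree_eq_zero_of_isUnit hu)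
      rw [h2, coeff_C, if_neg hαne] at hα1
      exact zero_ne_one hα1
    have hHnu : ¬ IsUnit (polyOf x true (d - e)) := by
      intro hu
      have h2 := eq_C_of_totalDegree_eq_zero (totalDegree_eq_zero_of_isUnit hu)
      have h3 : (MvPolynomial.map ψ F).totalDegree ≤ e := by
        rw [← hfac, h2]
        refine le_trans (totalDegree_mul _ _) ?_
        rw [totalDegree_C, add_zero]
        exact totalDegree_polyOf_le x false hed
      omega
    exact (hF.isUnit_or_isUnit hfac.symm).elim hGnu hHnu
  -- Step 2: Nullstellensatz gives 1 ∈ J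
  have hone : (1 : MvPolynomial (Idx l d) Kb) ∈ J := by
    have h1 : (1 : MvPolynomial (Idx l d) Kb) ∈ J.radical := by
      rw [← MvPolynomial.vanishingIdeal_zeroLocus_eq_radical (K := Kb), hzero]
      exact fun x hx => absurd hx (Set.notMem_empty x)
    obtain ⟨n, hn⟩ := h1
    rwa [one_pow] at hn
  obtain ⟨q, hq⟩ := (Submodule.mem_span_range_iff_exists_fun _).1 hone
  simp only [smul_eq_mul] at hq
  -- Step 3: a K-linear projection Kb → K sending 1 to 1
  obtain ⟨Tc, hTc⟩ := Submodule.exists_isCompl (K ∙ (1 : Kb))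
  set pr := Submodule.linearProjOfIsCompl _ _ hTc with hpr
  set π : Kb →ₗ[K] K :=
    (LinearEquiv.coord K Kb 1 one_ne_zero).toLinearMap.comp pr with hπ
  have hπ1 : π 1 = 1 := by
    have h1 : pr ((⟨1, Submodule.mem_span_singleton_self 1⟩ : K ∙ (1 : Kb)) : Kb)
        = ⟨1, Submodule.mem_span_singleton_self 1⟩ :=
      Submodule.linearProjOfIsCompl_apply_left hTc _
    have h2 : π 1 = (LinearEquiv.coord K Kb 1 one_ne_zero)
        ⟨1, Submodule.mem_span_singleton_self 1⟩ := by
      rw [hπ]; simp only [LinearMap.comp_apply]; rw [← h1]; rfl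
    rw [h2, LinearEquiv.coord_self]
  have hπmul : ∀ (c : K) (x : Kb), π (algebraMap K Kb c * x) = c * π x := by
    intro c x
    rw [← Algebra.smul_def, map_smul, smul_eq_mul]
  -- Step 4: descend the certificate to K
  have hq2 : ∑ i, rMap π (q i) * MvPolynomial.map φ₀ (gens d e α F i)
      = (1 : MvPolynomial (Idx l d) K) := by
    have h1 : ∀ i, rMap π (q i * MvPolynomial.map ψ (gens d e α F i))
        = rMap π (q i) * MvPolynomial.map φ₀ (gens d e α F i) := by
      intro i
      rw [hψ, ← MvPolynomial.map_map, rMap_mul_map π hπmul]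
    have h2 : rMapHom π (∑ i, q i * MvPolynomial.map ψ (gens d e α F i))
        = ∑ i, rMap π (q i) * MvPolynomial.map φ₀ (gens d e α F i) := by
      rw [map_sum]
      exact Finset.sum_congr rfl fun i _ => h1 i
    rw [← h2, hq]
    exact rMap_one π hπ1
  -- Step 5: clear denominators
  set T : Finset K := Finset.univ.biUnion
    (fun i : Option (Fin l → Fin (d + 1)) =>
      (rMap π (q i)).support.image fun m => coeff m (rMap π (q i))) with hT
  obtain ⟨b, hb⟩ := IsLocalization.exist_integer_multiples_of_finset (nonZeroDivisors A) T
  have hint : ∀ i m, ∃ r : A, φ₀ r = coeff m (C (φ₀ (b : A)) * rMap π (q i)) := by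
    intro i m
    rw [coeff_C_mul]
    by_cases hm : m ∈ (rMap π (q i)).support
    · have hmem : coeff m (rMap π (q i)) ∈ T := by
        rw [hT]
        exact Finset.mem_biUnion.2 ⟨i, Finset.mem_univ i,
          Finset.mem_image.2 ⟨m, hm, rfl⟩⟩
      obtain ⟨r, hr⟩ := hb _ hmem
      exact ⟨r, by rw [hr, Algebra.smul_def]⟩
    · exact ⟨0, by rw [notMem_support_iff.1 hm, mul_zero, map_zero]⟩
  have hPex : ∀ i, ∃ P : MvPolynomial (Idx l d) A,
      MvPolynomial.map φ₀ P = C (φ₀ (b : A)) * rMap π (q i) :=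
    fun i => exists_map_eq φ₀ _ (hint i)
  choose P hPdef using hPex
  -- Step 6: the certificate over A
  have hlift : C (b : A) = ∑ i, P i * gens d e α F i := by
    apply MvPolynomial.map_injective φ₀ (IsFractionRing.injective A K)
    rw [map_C, map_sum]
    calc C (φ₀ (b : A)) = C (φ₀ (b : A)) *
        ∑ i, rMap π (q i) * MvPolynomial.map φ₀ (gens d e α F i) := by rw [hq2, mul_one]
      _ = ∑ i, MvPolynomial.map φ₀ (P i * gens d e α F i) := by
          rw [Finset.mul_sum]
          refine Finset.sum_congr rfl fun i _ => ?_
          rw [map_mul, hPdef, mul_assoc]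
  -- Step 7: specialize
  refine ⟨b, nonZeroDivisors.ne_zero b.2, ?_⟩
  intro t G H hGH hGdeg hHdeg hGα
  set w : Idx l d → k := fun z => cond z.1 (H.coeff (enc z.2)) (G.coeff (enc z.2)) with hw
  have hGw : polyOf w false e = G := by
    ext a
    rw [coeff_polyOf w false hed, cf]
    split_ifs with h1
    · have hcoords : ∀ i, a i ≤ d := fun i => le_trans (coord_le_mdeg a i) (le_trans h1 hed)
      show G.coeff (enc (dec d a)) = coeff a G
      rw [enc_dec hcoords]
    · symm
      apply coeff_eq_zero_of_totalDegree_lt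
      have h2 : mdeg a = ∑ i ∈ a.support, a i := rfl
      omega
  have hHw : polyOf w true (d - e) = H := by
    ext a
    rw [coeff_polyOf w true (Nat.sub_le d e), cf]
    split_ifs with h1
    · have hcoords : ∀ i, a i ≤ d :=
        fun i => le_trans (coord_le_mdeg a i) (le_trans h1 (Nat.sub_le d e))
      show H.coeff (enc (dec d a)) = coeff a H
      rw [enc_dec hcoords]
    · symm
      apply coeff_eq_zero_of_totalDegree_lt
      have h2 : mdeg a = ∑ i ∈ a.support, a i := rfl
      omega
  have heqs : ∀ i, eval₂Hom (MvPolynomial.eval t) w (gens d e α F i) = 0 := by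
    intro i
    match i with
    | none =>
      simp only [gens, map_sub, eval₂Hom_X', map_one]
      have hcoords : ∀ i, α i ≤ d := fun i => le_trans (coord_le_mdeg α i) (hα ▸ hed)
      have h2 : w (false, dec d α) = G.coeff α := by
        show G.coeff (enc (dec d α)) = G.coeff α
        rw [enc_dec hcoords]
      rw [h2, hGα, sub_self]
    | some m =>
      simp only [gens]
      rw [eval₂Hom_eqn (MvPolynomial.eval t) w hed, hGw, hHw, ← hGH, coeff_map, sub_self]
  have hfin := congrArg (eval₂Hom (MvPolynomial.eval t) w) hlift
  rw [eval₂Hom_C, map_sum] at hfin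
  rw [hfin, Finset.sum_eq_zero]
  intro i _
  rw [map_mul, heqs i, mul_zero]

end Key

end BN

open BN in
theorem stmt14 {k : Type*} [Field k] [IsAlgClosed k] (s l : ℕ) (hl : 2 ≤ l)
    (F : MvPolynomial (Fin l) (MvPolynomial (Fin s) k))
    (hF : Irreducible (MvPolynomial.map
      ((algebraMap (FractionRing (MvPolynomial (Fin s) k))
          (AlgebraicClosure (FractionRing (MvPolynomial (Fin s) k)))).comp
        (algebraMap (MvPolynomial (Fin s) k) (FractionRing (MvPolynomial (Fin s) k)))) F)) :
    ∃ h : MvPolynomial (Fin s) k, h ≠ 0 ∧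
      ∀ t : Fin s → k, MvPolynomial.eval t h ≠ 0 →
        (MvPolynomial.map (MvPolynomial.eval t) F).totalDegree = F.totalDegree →
        Irreducible (MvPolynomial.map (MvPolynomial.eval t) F) := by
  classical
  set d := F.totalDegree with hd
  set ψ := ((algebraMap (FractionRing (MvPolynomial (Fin s) k))
          (AlgebraicClosure (FractionRing (MvPolynomial (Fin s) k)))).comp
        (algebraMap (MvPolynomial (Fin s) k) (FractionRing (MvPolynomial (Fin s) k)))) with hψdef
  have hψinj : Function.Injective ψ :=
    (algebraMap (FractionRing (MvPolynomial (Fin s) k))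
        (AlgebraicClosure (FractionRing (MvPolynomial (Fin s) k)))).injective.comp
      (IsFractionRing.injective (MvPolynomial (Fin s) k) (FractionRing (MvPolynomial (Fin s) k)))
  have hdψ : (MvPolynomial.map ψ F).totalDegree = d := by
    rw [totalDegree_map_eq hψinj F]
  have hd1 : 1 ≤ d := by
    by_contra hcon
    have h0 : (MvPolynomial.map ψ F).totalDegree = 0 := by omega
    have h2 := eq_C_of_totalDegree_eq_zero h0
    by_cases hc : coeff 0 (MvPolynomial.map ψ F) = 0
    · rw [hc, C_0] at h2
      rw [h2] at hF
      exact not_irreducible_zero hF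
    · exact hF.not_isUnit (h2 ▸ isUnit_of_C_ne_zero hc)
  -- choose a certificate polynomial for each possible normalized leading monomial
  have hbm : ∀ m : Fin l → Fin (d + 1), ∃ b : MvPolynomial (Fin s) k, b ≠ 0 ∧
      ((1 ≤ mdeg (enc m) ∧ mdeg (enc m) < d) →
        ∀ (t : Fin s → k) (G H : MvPolynomial (Fin l) k),
          MvPolynomial.map (MvPolynomial.eval t) F = G * H →
          G.totalDegree ≤ mdeg (enc m) → H.totalDegree ≤ d - mdeg (enc m) →
          G.coeff (enc m) = 1 → MvPolynomial.eval t b = 0) := by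
    intro m
    by_cases hm : 1 ≤ mdeg (enc m) ∧ mdeg (enc m) < d
    · obtain ⟨b, hb0, hbs⟩ := keyPair (K := FractionRing (MvPolynomial (Fin s) k))
        (Kb := AlgebraicClosure (FractionRing (MvPolynomial (Fin s) k)))
        F d (mdeg (enc m)) hd.symm hm.1 hm.2 (enc m) rfl hF
      exact ⟨b, hb0, fun _ => hbs⟩
    · exact ⟨1, one_ne_zero, fun hcond => absurd hcond hm⟩
  choose bm hbm0 hbms using hbm
  refine ⟨∏ m, bm m, Finset.prod_ne_zero_iff.2 (fun m _ => hbm0 m), ?_⟩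
  intro t ht hdegt
  have htm : ∀ m, MvPolynomial.eval t (bm m) ≠ 0 := by
    intro m h0
    apply ht
    rw [map_prod]
    exact Finset.prod_eq_zero (Finset.mem_univ m) h0
  have hFtne : MvPolynomial.map (MvPolynomial.eval t) F ≠ 0 := by
    intro h0
    rw [h0, totalDegree_zero] at hdegt
    omega
  constructor
  · apply not_isUnit_of_totalDegree_pos
    omega
  · intro G H hGH
    by_contra hcon
    push_neg at hcon
    obtain ⟨hGnu, hHnu⟩ := hcon
    have hGne : G ≠ 0 := fun h0 => hFtne (by rw [hGH, h0, zero_mul])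
    have hHne : H ≠ 0 := fun h0 => hFtne (by rw [hGH, h0, mul_zero])
    have hdeg2 : G.totalDegree + H.totalDegree = d := by
      rw [← totalDegree_mul_eq hGne hHne, ← hGH, hdegt]
    have hGd : 1 ≤ G.totalDegree := by
      rcases Nat.eq_zero_or_pos G.totalDegree with h0 | h0
    -- if deg G = 0 then G is a unit, contradiction
      · exact absurd ((isUnit_iff_deg_zero hGne).2 h0) hGnu
      · exact h0
    have hHd : 1 ≤ H.totalDegree := by
      rcases Nat.eq_zero_or_pos H.totalDegree with h0 | h0
      · exact absurd ((isUnit_iff_deg_zero hHne).2 h0) hHnu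
      · exact h0
    obtain ⟨α, hαmem, hαdeg⟩ :=
      Finset.exists_mem_eq_sup G.support (support_nonempty.2 hGne) mdeg
    have hαe : mdeg α = G.totalDegree := hαdeg.symm
    have hc0 : G.coeff α ≠ 0 := mem_support_iff.1 hαmem
    have hcoords : ∀ i, α i ≤ d := fun i => le_trans (coord_le_mdeg α i) (by omega)
    have hencm₀ : enc (dec d α) = α := enc_dec hcoords
    have hcond : 1 ≤ mdeg (enc (dec d α)) ∧ mdeg (enc (dec d α)) < d := by
      rw [hencm₀, hαe]
      omega
    apply htm (dec d α)
    apply hbms (dec d α) hcond t (C (G.coeff α)⁻¹ * G) (C (G.coeff α) * H)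
    · rw [hGH, mul_mul_mul_comm, ← C_mul, inv_mul_cancel₀ hc0, C_1, one_mul]
    · refine le_trans (totalDegree_mul _ _) ?_
      rw [totalDegree_C, zero_add, hencm₀, hαe]
    · refine le_trans (totalDegree_mul _ _) ?_
      rw [totalDegree_C, zero_add, hencm₀, hαe]
      omega
    · rw [hencm₀, coeff_C_mul, inv_mul_cancel₀ hc0]
end BN
end
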